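/- arXiv:1510.01753 — 6 statements merged into one kernel-verified Lean document; each statement's English description precedes it below -/
import Mathlib

section
/- Let m ≥ 1 and let Σ be an m-letter alphabet. Let L be a set of finite words over Σ that is closed under taking factors, contains the empty word, and contains every word of length 1. For i ≥ 0 let n_i be the number of words of length i in L, and let L' be the set of words w over Σ such that w is not in L but the prefix of w of length |w|−1 is in L. Let (a_j)_{j≥1} be nonnegative reals and let x_0 > 0 be such that the series Σ_{j≥1} a_j x_0^j converges and 1 − m·x_0 + Σ_{j≥1} a_j x_0^j = 0. If for every i ≥ 1 the number of words of length i in L' is at most Σ_{j=1}^{i} a_j · n_{i−j}, then n_i ≥ x_0^{−i} for every i ≥ 0. -/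
/-- Extended power series method: let `L` be a factorial language over an `m`-letter
alphabet containing the empty word and all words of length 1, let `n i` be the number
of words of length `i` in `L`, and let `L'` be the words outside `L` whose longest
proper prefix is in `L`.  If nonnegative reals `a j` and a positive real `x₀` satisfy
`1 - m·x₀ + ∑_{j≥1} a j · x₀^j = 0` (the series converging) and, for every `i ≥ 1`,
the number of words of length `i` in `L'` is at most `∑_{j=1}^{i} a j · n (i-j)`,
then `n i ≥ x₀⁻ⁱ` for every `i`. -/
theorem power_series_method (m : ℕ) (hm : 1 ≤ m)
    (L : Set (List (Fin m)))
    (hfact : ∀ w ∈ L, ∀ u : List (Fin m), u <:+: w → u ∈ L)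
    (hnil : ([] : List (Fin m)) ∈ L)
    (hone : ∀ w : List (Fin m), w.length = 1 → w ∈ L)
    (n : ℕ → ℕ)
    (hn : ∀ i, n i = Set.ncard {w : List (Fin m) | w ∈ L ∧ w.length = i})
    (L' : Set (List (Fin m)))
    (hL' : L' = {w : List (Fin m) | w ∉ L ∧ w.take (w.length - 1) ∈ L})
    (a : ℕ → ℝ) (ha : ∀ j, 0 ≤ a j)
    (x₀ : ℝ) (hx₀ : 0 < x₀)
    (hsum : Summable (fun j : ℕ => a (j + 1) * x₀ ^ (j + 1)))
    (hroot : 1 - (m : ℝ) * x₀ + ∑' j : ℕ, a (j + 1) * x₀ ^ (j + 1) = 0)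
    (hbound : ∀ i : ℕ, 1 ≤ i →
      (Set.ncard {w : List (Fin m) | w ∈ L' ∧ w.length = i} : ℝ) ≤
        ∑ j ∈ Finset.Icc 1 i, a j * (n (i - j) : ℝ)) :
    ∀ i : ℕ, x₀ ^ (-(i : ℤ)) ≤ (n i : ℝ) := by
  classical
  -- finiteness
  have hfinlen : ∀ i : ℕ, {w : List (Fin m) | w.length = i}.Finite := fun i =>
    List.finite_length_eq (Fin m) i
  have hfinL : ∀ i : ℕ, {w : List (Fin m) | w ∈ L ∧ w.length = i}.Finite := fun i =>
    (hfinlen i).subset (fun w hw => hw.2)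
  have hfinL' : ∀ i : ℕ, {w : List (Fin m) | w ∈ L' ∧ w.length = i}.Finite := fun i =>
    (hfinlen i).subset (fun w hw => hw.2)
  -- n 0 = 1
  have hn0 : n 0 = 1 := by
    rw [hn]
    have : {w : List (Fin m) | w ∈ L ∧ w.length = 0} = {([] : List (Fin m))} := by
      ext w
      simp only [Set.mem_setOf_eq, Set.mem_singleton_iff, List.length_eq_zero_iff]
      constructor
      · rintro ⟨-, h⟩; exact h
      · rintro rfl; exact ⟨hnil, rfl⟩
    rw [this, Set.ncard_singleton]
  -- the key counting inequality
  have hcount : ∀ i : ℕ, m * n i ≤ n (i + 1) +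
      Set.ncard {w : List (Fin m) | w ∈ L' ∧ w.length = i + 1} := by
    intro i
    set Li : Finset (List (Fin m)) := (hfinL i).toFinset with hLi
    have hinj : Function.Injective
        (fun p : List (Fin m) × Fin m => p.1 ++ [p.2]) := by
      rintro ⟨u, c⟩ ⟨v, d⟩ h
      simp only at h
      have h' : c :: u.reverse = d :: v.reverse := by
        simpa using congrArg List.reverse h
      have hc : c = d := (List.cons.inj h').1
      have hu : u = v := by
        simpa using congrArg List.reverse (List.cons.inj h').2
      simp [hc, hu]
    set SF : Finset (List (Fin m)) :=
      (Li ×ˢ (Finset.univ : Finset (Fin m))).image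
        (fun p : List (Fin m) × Fin m => p.1 ++ [p.2]) with hSF
    have hSFcard : SF.card = n i * m := by
      rw [hSF, Finset.card_image_of_injective _ hinj, Finset.card_product,
        Finset.card_univ, Fintype.card_fin]
      congr 1
      rw [hn i, Set.ncard_eq_toFinset_card _ (hfinL i)]
    have hsub : SF ⊆ (hfinL (i+1)).toFinset ∪ (hfinL' (i+1)).toFinset := by
      intro w hw
      rw [hSF, Finset.mem_image] at hw
      obtain ⟨⟨u, c⟩, hp, rfl⟩ := hw
      rw [Finset.mem_product] at hp
      have hu : u ∈ L ∧ u.length = i := by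
        have := hp.1; rw [hLi, Set.Finite.mem_toFinset] at this; exact this
      have hlen : (u ++ [c]).length = i + 1 := by simp [hu.2]
      rw [Finset.mem_union, Set.Finite.mem_toFinset, Set.Finite.mem_toFinset]
      by_cases hmem : u ++ [c] ∈ L
      · exact Or.inl ⟨hmem, hlen⟩
      · refine Or.inr ⟨?_, hlen⟩
        rw [hL']
        refine ⟨hmem, ?_⟩
        have : (u ++ [c]).take ((u ++ [c]).length - 1) = u := by
          rw [hlen]
          simp [List.take_append_of_le_length, hu.2]
        rw [this]
        exact hu.1
    calc m * n i = SF.card := by rw [hSFcard, Nat.mul_comm]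
      _ ≤ ((hfinL (i+1)).toFinset ∪ (hfinL' (i+1)).toFinset).card :=
          Finset.card_le_card hsub
      _ ≤ (hfinL (i+1)).toFinset.card + (hfinL' (i+1)).toFinset.card :=
          Finset.card_union_le _ _
      _ = n (i+1) + Set.ncard {w : List (Fin m) | w ∈ L' ∧ w.length = i + 1} := by
          rw [hn (i+1), Set.ncard_eq_toFinset_card _ (hfinL (i+1)),
            Set.ncard_eq_toFinset_card _ (hfinL' (i+1))]
  -- tsum facts
  set T : ℝ := ∑' j : ℕ, a (j + 1) * x₀ ^ (j + 1) with hT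
  have hmx : (m : ℝ) * x₀ = 1 + T := by linarith
  have hTnn : 0 ≤ T := tsum_nonneg (fun j => mul_nonneg (ha _) (pow_nonneg hx₀.le _))
  have hpartial : ∀ N : ℕ, ∑ j ∈ Finset.Icc 1 N, a j * x₀ ^ j ≤ T := by
    intro N
    have h1 : ∑ j ∈ Finset.Icc 1 N, a j * x₀ ^ j
        = ∑ j ∈ Finset.range N, a (j + 1) * x₀ ^ (j + 1) := by
      rw [← Finset.Ico_add_one_right_eq_Icc, Finset.sum_Ico_eq_sum_range]
      simp [Nat.add_comm 1]
    rw [h1]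
    exact Summable.sum_le_tsum (Finset.range N)
      (fun j _ => mul_nonneg (ha _) (pow_nonneg hx₀.le _)) hsum
  -- the ratio inequality by strong induction
  have hratio : ∀ i : ℕ, (n i : ℝ) ≤ x₀ * n (i + 1) := by
    intro i
    induction i using Nat.strong_induction_on with
    | _ i ih =>
      have hchain : ∀ d k : ℕ, k + d = i → (n k : ℝ) ≤ x₀ ^ d * n i := by
        intro d
        induction d with
        | zero => intro k hk; simp [← hk]
        | succ d ihd =>
          intro k hk
          have h1 : (n k : ℝ) ≤ x₀ * n (k + 1) := ih k (by omega)
          have h2 : (n (k+1) : ℝ) ≤ x₀ ^ d * n i := ihd (k+1) (by omega)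
          calc (n k : ℝ) ≤ x₀ * n (k+1) := h1
            _ ≤ x₀ * (x₀ ^ d * n i) := by
                exact mul_le_mul_of_nonneg_left h2 hx₀.le
            _ = x₀ ^ (d+1) * n i := by ring
      have hC : (m : ℝ) * n i ≤ n (i + 1) +
          (Set.ncard {w : List (Fin m) | w ∈ L' ∧ w.length = i + 1} : ℝ) := by
        exact_mod_cast hcount i
      have hB := hbound (i+1) (by omega)
      have key : ∑ j ∈ Finset.Icc 1 (i+1), a j * (n (i+1-j) : ℝ)
          ≤ (n i : ℝ) / x₀ * T := by
        have step1 : ∑ j ∈ Finset.Icc 1 (i+1), a j * (n (i+1-j) : ℝ)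
            ≤ ∑ j ∈ Finset.Icc 1 (i+1), a j * x₀ ^ j * ((n i : ℝ) / x₀) := by
          apply Finset.sum_le_sum
          intro j hj
          rw [Finset.mem_Icc] at hj
          have hd : (i+1-j) + (j-1) = i := by omega
          have h2 := hchain (j-1) (i+1-j) hd
          have hx : x₀ ^ j * ((n i : ℝ) / x₀) = x₀ ^ (j-1) * n i := by
            have hj1 : j - 1 + 1 = j := by omega
            rw [← hj1, pow_succ]
            field_simp
            simp [mul_comm]
          rw [mul_assoc, hx]
          exact mul_le_mul_of_nonneg_left h2 (ha j)
        have step2 : ∑ j ∈ Finset.Icc 1 (i+1), a j * x₀ ^ j * ((n i : ℝ) / x₀)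
            ≤ T * ((n i : ℝ) / x₀) := by
          rw [← Finset.sum_mul]
          exact mul_le_mul_of_nonneg_right (hpartial (i+1))
            (div_nonneg (Nat.cast_nonneg _) hx₀.le)
        calc _ ≤ _ := step1
          _ ≤ T * ((n i : ℝ) / x₀) := step2
          _ = (n i : ℝ) / x₀ * T := by ring
      -- combine: m * n i ≤ n(i+1) + n i / x₀ * T, and m x₀ = 1 + T
      have hfin : (n i : ℝ) / x₀ ≤ (n (i+1) : ℝ) := by
        have h3 : (m : ℝ) * n i ≤ n (i+1) + (n i : ℝ) / x₀ * T :=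
          le_trans hC (by linarith)
        have h4 : (m : ℝ) * x₀ * n i ≤ x₀ * n (i+1) + (n i : ℝ) * T := by
          have := mul_le_mul_of_nonneg_left h3 hx₀.le
          calc (m : ℝ) * x₀ * n i = x₀ * ((m : ℝ) * n i) := by ring
            _ ≤ x₀ * (n (i+1) + (n i : ℝ) / x₀ * T) := this
            _ = x₀ * n (i+1) + (n i : ℝ) * T := by field_simp
        rw [hmx] at h4
        rw [div_le_iff₀ hx₀]
        nlinarith
      rw [div_le_iff₀ hx₀] at hfin
      linarith
  -- conclude
  intro i
  induction i with
  | zero => simp [hn0]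
  | succ i ih =>
    have h1 : (-(↑(i+1) : ℤ)) = -(i : ℤ) - 1 := by push_cast; ring
    rw [h1, zpow_sub₀ hx₀.ne', zpow_one]
    rw [div_le_iff₀ hx₀]
    have h2 := hratio i
    nlinarith
end

section
/- If a pattern p has length at least 2^{v(p)}, then p contains a doubled pattern as a contiguous factor. -/
/-- A pattern is doubled if every variable occurring in it occurs at least twice. -/
def Doubled {V : Type*} [DecidableEq V] (p : List V) : Prop :=
  ∀ v ∈ p, 2 ≤ p.count v

private lemma aux_doubled {V : Type*} [DecidableEq V] :
    ∀ (N : ℕ) (p : List V), p.length ≤ N → 2 ^ p.toFinset.card ≤ p.length →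
    ∃ q : List V, q ≠ [] ∧ q <:+: p ∧ Doubled q := by
  intro N
  induction N with
  | zero =>
    intro p hN hlen
    have h1 : 1 ≤ 2 ^ p.toFinset.card := Nat.one_le_two_pow
    omega
  | succ N ih =>
    intro p hN hlen
    have hpos : 0 < p.length := lt_of_lt_of_le (Nat.pos_of_ne_zero (by positivity)) hlen
    by_cases hd : ∀ v ∈ p, 2 ≤ p.count v
    · exact ⟨p, List.length_pos_iff.mp hpos, List.infix_refl p, hd⟩
    · push_neg at hd
      obtain ⟨v, hv, hc⟩ := hd
      have hcpos : 0 < p.count v := List.count_pos_iff.mpr hv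
      have hc1 : p.count v = 1 := by omega
      obtain ⟨a, b, rfl⟩ := List.append_of_mem hv
      have hcab : a.count v + (b.count v + 1) = 1 := by
        simpa [List.count_append, List.count_cons] using hc1
      have hva : v ∉ a := by
        have : a.count v = 0 := by omega
        exact (List.count_eq_zero.mp this)
      have hvb : v ∉ b := by
        have : b.count v = 0 := by omega
        exact (List.count_eq_zero.mp this)
      set n := (a ++ v :: b).toFinset.card with hn
      have hvmem : v ∈ (a ++ v :: b).toFinset := List.mem_toFinset.mpr hv
      have hn1 : 1 ≤ n := Finset.card_pos.mpr ⟨v, hvmem⟩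
      have hlenab : (a ++ v :: b).length = a.length + b.length + 1 := by
        simp [List.length_append]; omega
      have key : ∀ c : List V, c <:+: (a ++ v :: b) → v ∉ c →
          2 ^ (n - 1) ≤ c.length → c.length ≤ N →
          ∃ q : List V, q ≠ [] ∧ q <:+: (a ++ v :: b) ∧ Doubled q := by
        intro c hinf hvc hclen hcN
        have hsub : c.toFinset ⊆ ((a ++ v :: b).toFinset).erase v := by
          intro x hx
          rw [List.mem_toFinset] at hx
          refine Finset.mem_erase.mpr ⟨?_, List.mem_toFinset.mpr (hinf.subset hx)⟩
          rintro rfl; exact hvc hx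
        have hcard : c.toFinset.card ≤ n - 1 := by
          calc c.toFinset.card ≤ (((a ++ v :: b).toFinset).erase v).card :=
                Finset.card_le_card hsub
            _ = n - 1 := by rw [Finset.card_erase_of_mem hvmem]
        have hpow : 2 ^ c.toFinset.card ≤ c.length :=
          le_trans (Nat.pow_le_pow_right (by norm_num) hcard) hclen
        obtain ⟨q, hq1, hq2, hq3⟩ := ih c hcN hpow
        exact ⟨q, hq1, hq2.trans hinf, hq3⟩
      have h2n : 2 * 2 ^ (n - 1) = 2 ^ n := by
        rw [← pow_succ']
        congr 1
        omega
      have hsum : 2 ^ n ≤ a.length + b.length + 1 := by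
        rw [← hlenab]; exact hlen
      by_cases hab : 2 ^ (n - 1) ≤ a.length
      · exact key a ((List.prefix_append a (v :: b)).isInfix) hva hab (by omega)
      · have hb : 2 ^ (n - 1) ≤ b.length := by omega
        have hbinf : b <:+: (a ++ v :: b) := by
          refine List.IsSuffix.isInfix ⟨a ++ [v], ?_⟩
          simp
        exact key b hbinf hvb hb (by omega)

/-- If a pattern `p` has length at least `2^(v(p))`, where `v(p)` is the number of
distinct variables of `p`, then `p` contains a (nonempty) doubled pattern as a factor. -/
theorem long_pattern_contains_doubled_factor {V : Type*} [DecidableEq V]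
    (p : List V) (hp : p ≠ []) (hlen : 2 ^ p.toFinset.card ≤ p.length) :
    ∃ q : List V, q ≠ [] ∧ q <:+: p ∧ Doubled q :=
  aux_doubled p.length p le_rfl hlen
end

section
/- Every doubled pattern with exactly 4 distinct variables and length at least 9 is 3-avoidable. Moreover, if such a pattern p has length exactly 9, then for every n ≥ 0 the number of words of length n over a 3-letter alphabet that avoid p is at least 2.941^n. -/
set_option linter.unusedSectionVars false

/-- An occurrence of the pattern `p` in the word `w`: a non-erasing morphism
`h` (given by its values on variables) whose image of `p` is a factor of `w`. -/
def Occurs {V α : Type*} (p : List V) (w : List α) : Prop :=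
  ∃ h : V → List α, (∀ v, h v ≠ []) ∧ (p.flatMap h) <:+: w

/-- A pattern is `k`-avoidable if some infinite word over a `k`-letter alphabet
contains no occurrence of it. -/
def IsKAvoidable {V : Type*} (k : ℕ) (p : List V) : Prop :=
  ∃ f : ℕ → Fin k, ∀ n : ℕ, ¬ Occurs p (List.ofFn fun i : Fin n => f i)

abbrev DPA.K := Fin 3

namespace DPA
open Finset
open scoped Classical

variable {V : Type*} [DecidableEq V]

lemma occurs_of_infix {p : List V} {s w : List K} (h : Occurs p s) (hsw : s <:+: w) :
    Occurs p w := by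
  obtain ⟨f, hf, hinf⟩ := h
  exact ⟨f, hf, hinf.trans hsw⟩

lemma le_length_flatMap {p : List V} (h : V → List K) (hh : ∀ v, h v ≠ []) :
    p.length ≤ (p.flatMap h).length := by
  rw [List.length_flatMap]
  calc p.length = (p.map (fun _ => 1)).sum := by simp
    _ ≤ _ := by
        apply List.sum_le_sum
        intro v _
        simpa [Nat.one_le_iff_ne_zero, List.length_eq_zero_iff] using hh v

lemma length_le_of_occurs {p : List V} {w : List K} (h : Occurs p w) : p.length ≤ w.length := by
  obtain ⟨f, hf, hinf⟩ := h
  exact (le_length_flatMap f hf).trans hinf.length_le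

noncomputable def W (n : ℕ) : Finset (List K) :=
  (Finset.univ : Finset (Fin n → K)).image List.ofFn

lemma mem_W {n : ℕ} {w : List K} : w ∈ W n ↔ w.length = n := by
  constructor
  · rintro hw
    simp only [W, Finset.mem_image] at hw
    obtain ⟨f, -, rfl⟩ := hw
    simp
  · rintro rfl
    simp only [W, Finset.mem_image]
    exact ⟨fun i => w[(i : ℕ)], Finset.mem_univ _, List.ofFn_getElem⟩

lemma card_W (n : ℕ) : (W n).card = 3 ^ n := by
  rw [W, Finset.card_image_of_injective _ List.ofFn_injective]
  simp

variable (p : List V)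

/-- avoiding words of length n -/
noncomputable def A (n : ℕ) : Finset (List K) :=
  (W n).filter (fun w => ¬ Occurs p w)

lemma mem_A {n : ℕ} {w : List K} : w ∈ A p n ↔ w.length = n ∧ ¬ Occurs p w := by
  rw [A, Finset.mem_filter, mem_W]

lemma prefix_mem_A {n : ℕ} {w t : List K} (hw : w ∈ A p n) (ht : t <+: w) :
    t ∈ A p t.length := by
  rw [mem_A] at hw ⊢
  exact ⟨rfl, fun hc => hw.2 (occurs_of_infix hc ht.isInfix)⟩

noncomputable def a (n : ℕ) : ℕ := (A p n).card

lemma A_zero (hp : p ≠ []) : A p 0 = {([] : List K)} := by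
  ext w
  rw [mem_A]
  simp only [List.length_eq_zero_iff, Finset.mem_singleton]
  constructor
  · tauto
  · rintro rfl
    refine ⟨rfl, fun hc => ?_⟩
    have := length_le_of_occurs hc
    simp only [List.length_nil, Nat.le_zero, List.length_eq_zero_iff] at this
    exact hp this

lemma a_zero (hp : p ≠ []) : a p 0 = 1 := by rw [a, A_zero p hp]; simp

/-- one-letter extensions of avoiding words -/
noncomputable def Ext (n : ℕ) : Finset (List K) :=
  ((A p n) ×ˢ (Finset.univ : Finset K)).image (fun x => x.1 ++ [x.2])

lemma concat_inj : Function.Injective (fun x : List K × K => x.1 ++ [x.2]) := by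
  rintro ⟨w1, c1⟩ ⟨w2, c2⟩ h
  simp only at h
  obtain ⟨h1, h2⟩ := List.append_inj' h rfl
  simp only [List.cons.injEq, and_true] at h2
  exact Prod.ext h1 h2

lemma card_Ext (n : ℕ) : (Ext p n).card = 3 * a p n := by
  rw [Ext, Finset.card_image_of_injective _ (concat_inj), Finset.card_product]
  simp [a, mul_comm]

lemma mem_Ext {n : ℕ} {u : List K} :
    u ∈ Ext p n ↔ ∃ w c, w ∈ A p n ∧ u = w ++ [c] := by
  simp only [Ext, Finset.mem_image, Finset.mem_product, Finset.mem_univ, and_true, Prod.exists]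
  constructor
  · rintro ⟨w, c, hw, rfl⟩; exact ⟨w, c, hw, rfl⟩
  · rintro ⟨w, c, hw, rfl⟩; exact ⟨w, c, hw, rfl⟩

noncomputable def Bad (n : ℕ) : Finset (List K) :=
  (Ext p n).filter (fun w => Occurs p w)

lemma three_mul_le (n : ℕ) : 3 * a p n ≤ a p (n + 1) + (Bad p n).card := by
  classical
  have hsplit := Finset.card_filter_add_card_filter_not
    (s := Ext p n) (p := fun w => Occurs p w)
  have hsub : (Ext p n).filter (fun w => ¬ Occurs p w) ⊆ A p (n+1) := by
    intro u hu
    rw [Finset.mem_filter] at hu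
    obtain ⟨hu1, hu2⟩ := hu
    rw [mem_Ext] at hu1
    obtain ⟨w, c, hw, rfl⟩ := hu1
    rw [mem_A]
    refine ⟨?_, hu2⟩
    have := (mem_A p).mp hw
    simp [this.1]
  have h1 : ((Ext p n).filter (fun w => ¬ Occurs p w)).card ≤ a p (n+1) :=
    Finset.card_le_card hsub
  have := card_Ext p n
  rw [Bad]
  omega

lemma take_mem_A {n j : ℕ} {u : List K} (hu : u ∈ A p n) (hj : j ≤ n) :
    u.take j ∈ A p j := by
  have hul : u.length = n := ((mem_A p).mp hu).1
  have := prefix_mem_A p hu (List.take_prefix j u)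
  rwa [List.length_take, min_eq_left (by omega)] at this
  
lemma bad_decomp {n : ℕ} {u : List K} (hu : u ∈ Bad p n) :
    ∃ g : V → List K, (∀ v, g v ≠ []) ∧ (p.flatMap g).length ≤ n + 1 ∧
      u.length = n + 1 ∧
      u = u.take (n + 1 - (p.flatMap g).length) ++ p.flatMap g ∧
      u.take n ∈ A p n := by
  rw [Bad, Finset.mem_filter] at hu
  obtain ⟨huE, g, hg, hinf⟩ := hu
  rw [mem_Ext] at huE
  obtain ⟨w, c, hw, rfl⟩ := huE
  have hwlen : w.length = n := ((mem_A p).mp hw).1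
  have hlen : (w ++ [c]).length = n + 1 := by simp [hwlen]
  obtain ⟨x, y, hxy⟩ := hinf
  -- y must be empty
  have hy : y = [] := by
    rcases List.eq_nil_or_concat y with h | ⟨y', d, rfl⟩
    · exact h
    · exfalso
      have : (x ++ p.flatMap g ++ y') ++ [d] = w ++ [c] := by
        simpa [List.append_assoc] using hxy
      obtain ⟨h1, -⟩ := List.append_inj' this rfl
      exact ((mem_A p).mp hw).2 ⟨g, hg, x, y', by simpa [List.append_assoc] using h1⟩
  subst hy
  simp only [List.append_nil] at hxy
  have hxlen : x.length + (p.flatMap g).length = n + 1 := by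
    have := congrArg List.length hxy
    simpa [hwlen] using this
  refine ⟨g, hg, by omega, hlen, ?_, ?_⟩
  · have hxx : x = (w ++ [c]).take (n + 1 - (p.flatMap g).length) := by
      rw [← hxy]
      rw [List.take_append_of_le_length (by omega)]
      rw [List.take_of_length_le (by omega)]
    rw [← hxx, ← hxy]
  · have : (w ++ [c]).take n = w := by
      rw [List.take_append_of_le_length (by omega), List.take_of_length_le (by omega)]
    rw [this]; exact hw


section Enum

variable (e : Fin 4 → V)

/-- extend a `Fin 4`-indexed family of images to all of `V` -/
noncomputable def extFun (g : Fin 4 → List K) : V → List K :=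
  fun v => if h : ∃ i, e i = v then g h.choose else [(0 : K)]

lemma extFun_ne_nil {g : Fin 4 → List K} (hg : ∀ i, g i ≠ []) (v : V) :
    extFun e g v ≠ [] := by
  rw [extFun]
  split
  · apply hg
  · simp

lemma extFun_apply (he : Function.Injective e) (g : Fin 4 → List K) (i : Fin 4) :
    extFun e g (e i) = g i := by
  rw [extFun, dif_pos ⟨i, rfl⟩]
  congr 1
  exact he (⟨i, rfl⟩ : ∃ j, e j = e i).choose_spec

lemma flatMap_extFun (he : Function.Injective e) (hcov : ∀ v ∈ p, ∃ i, e i = v)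
    (g : V → List K) :
    p.flatMap (extFun e (fun i => g (e i))) = p.flatMap g := by
  unfold List.flatMap
  congr 1
  apply List.map_congr_left
  intro v hv
  obtain ⟨i, rfl⟩ := hcov v hv
  rw [extFun_apply e he]

lemma length_flatMap_eq (he : Function.Injective e) (hcov : ∀ v ∈ p, ∃ i, e i = v)
    (hel : ∀ i, e i ∈ p) (h : V → List K) :
    (p.flatMap h).length = ∑ i, p.count (e i) * (h (e i)).length := by
  rw [List.length_flatMap]
  have h1 : (p.map (List.length ∘ h)).sum = ∑ m ∈ p.toFinset, p.count m • (List.length ∘ h) m :=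
    Finset.sum_list_map_count p _
  have h2 : p.toFinset = Finset.univ.image e := by
    ext v
    simp only [List.mem_toFinset, Finset.mem_image, Finset.mem_univ, true_and]
    constructor
    · intro hv; exact hcov v hv
    · rintro ⟨i, rfl⟩; exact hel i
  rw [show (fun a => (h a).length) = List.length ∘ h from rfl, h1, h2, Finset.sum_image (fun i _ j _ hij => he hij)]
  simp [smul_eq_mul]

lemma sum_count_eq (he : Function.Injective e) (hcov : ∀ v ∈ p, ∃ i, e i = v)
    (hel : ∀ i, e i ∈ p) :
    ∑ i, p.count (e i) = p.length := by
  have h2 : p.toFinset = Finset.univ.image e := by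
    ext v
    simp only [List.mem_toFinset, Finset.mem_image, Finset.mem_univ, true_and]
    constructor
    · intro hv; exact hcov v hv
    · rintro ⟨i, rfl⟩; exact hel i
  have := List.sum_toFinset_count_eq_length p
  rw [h2, Finset.sum_image (fun i _ j _ hij => he hij)] at this
  exact this

/-- the total image length of a shape -/
def mOf (ℓ : Fin 4 → ℕ) : ℕ := ∑ i, p.count (e i) * ℓ i

/-- admissible shapes -/
noncomputable def T (n : ℕ) : Finset (Fin 4 → ℕ) :=
  (Fintype.piFinset (fun _ => Finset.Icc 1 n)).filter (fun ℓ => mOf p e ℓ ≤ n + 1)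

lemma bad_subset (hd : ∀ v ∈ p, 2 ≤ p.count v) (hlen : 9 ≤ p.length)
    (he : Function.Injective e) (hcov : ∀ v ∈ p, ∃ i, e i = v) (hel : ∀ i, e i ∈ p)
    (n : ℕ) :
    Bad p n ⊆ (T p e n).biUnion (fun ℓ =>
      ((Fintype.piFinset (fun i => W (ℓ i))) ×ˢ A p (n + 1 - mOf p e ℓ)).image
        (fun q => q.2 ++ p.flatMap (extFun e q.1))) := by
  intro u hu
  obtain ⟨g, hg, hm_le, hulen, hdecomp, htaken⟩ := bad_decomp p hu
  set m := (p.flatMap g).length with hm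
  have hm9 : 9 ≤ m := hlen.trans (le_length_flatMap g hg)
  set ℓ : Fin 4 → ℕ := fun i => (g (e i)).length with hℓ
  have hmOf : mOf p e ℓ = m := (length_flatMap_eq p e he hcov hel g).symm
  have hcount2 : ∀ i, 2 ≤ p.count (e i) := fun i => hd (e i) (hel i)
  have hℓ1 : ∀ i, 1 ≤ ℓ i := by
    intro i
    have := hg (e i)
    simpa [hℓ, Nat.one_le_iff_ne_zero, List.length_eq_zero_iff] using this
  have hℓle : ∀ i, 2 * ℓ i ≤ m := by
    intro i
    calc 2 * ℓ i ≤ p.count (e i) * ℓ i := by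
          exact Nat.mul_le_mul_right _ (hcount2 i)
      _ ≤ mOf p e ℓ := Finset.single_le_sum (f := fun j => p.count (e j) * ℓ j)
          (fun j _ => Nat.zero_le _) (Finset.mem_univ i)
      _ = m := hmOf
  rw [Finset.mem_biUnion]
  refine ⟨ℓ, ?_, ?_⟩
  · rw [T, Finset.mem_filter, Fintype.mem_piFinset]
    constructor
    · intro i
      rw [Finset.mem_Icc]
      have h2l := hℓle i
      exact ⟨hℓ1 i, by omega⟩
    · omega
  · rw [Finset.mem_image]
    refine ⟨⟨fun i => g (e i), u.take (n + 1 - m)⟩, ?_, ?_⟩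
    · rw [Finset.mem_product]
      constructor
      · rw [Fintype.mem_piFinset]
        intro i
        rw [mem_W]
      · have h1 : u.take (n + 1 - m) ∈ A p (n + 1 - m) := by
          have : u.take (n + 1 - m) = (u.take n).take (n + 1 - m) := by
            rw [List.take_take, min_eq_left (by omega)]
          rw [this]
          exact take_mem_A p htaken (by omega)
        rw [hmOf]
        exact h1
    · simp only
      rw [flatMap_extFun p e he hcov g]
      exact hdecomp.symm

lemma bad_card_le (hd : ∀ v ∈ p, 2 ≤ p.count v) (hlen : 9 ≤ p.length)
    (he : Function.Injective e) (hcov : ∀ v ∈ p, ∃ i, e i = v) (hel : ∀ i, e i ∈ p)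
    (n : ℕ) :
    (Bad p n).card ≤ ∑ ℓ ∈ T p e n, 3 ^ (∑ i, ℓ i) * a p (n + 1 - mOf p e ℓ) := by
  calc (Bad p n).card ≤ ((T p e n).biUnion (fun ℓ =>
      ((Fintype.piFinset (fun i => W (ℓ i))) ×ˢ A p (n + 1 - mOf p e ℓ)).image
        (fun q => q.2 ++ p.flatMap (extFun e q.1)))).card :=
      Finset.card_le_card (bad_subset p e hd hlen he hcov hel n)
    _ ≤ ∑ ℓ ∈ T p e n, (((Fintype.piFinset (fun i => W (ℓ i))) ×ˢ A p (n + 1 - mOf p e ℓ)).image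
        (fun q => q.2 ++ p.flatMap (extFun e q.1))).card := Finset.card_biUnion_le
    _ ≤ ∑ ℓ ∈ T p e n, 3 ^ (∑ i, ℓ i) * a p (n + 1 - mOf p e ℓ) := by
      apply Finset.sum_le_sum
      intro ℓ _
      calc _ ≤ ((Fintype.piFinset (fun i => W (ℓ i))) ×ˢ A p (n + 1 - mOf p e ℓ)).card :=
            Finset.card_image_le
        _ = 3 ^ (∑ i, ℓ i) * a p (n + 1 - mOf p e ℓ) := by
            rw [Finset.card_product, Fintype.card_piFinset]
            simp only [card_W]
            rw [Finset.prod_pow_eq_pow_sum]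
            rfl

end Enum


section Analytic

noncomputable def b2 : ℝ := ((3:ℝ)/2.941^2)/(1-3/2.941^2)
noncomputable def b3 : ℝ := ((3:ℝ)/2.941^3)/(1-3/2.941^3)

lemma geom_bound {r : ℝ} (h0 : 0 ≤ r) (h1 : r < 1) (n : ℕ) :
    ∑ ℓ ∈ Finset.Icc 1 n, r ^ ℓ ≤ r / (1 - r) := by
  have h2 : ∑ ℓ ∈ Finset.Icc 1 n, r ^ ℓ = r * ∑ i ∈ Finset.range n, r ^ i := by
    rw [← Finset.Ico_add_one_right_eq_Icc, Finset.sum_Ico_eq_sum_range]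
    simp only [Nat.succ_sub_one, Nat.add_sub_cancel, Finset.mul_sum]
    apply Finset.sum_congr rfl
    intro i _
    rw [pow_add, pow_one]
  rw [h2, div_eq_mul_inv]
  apply mul_le_mul_of_nonneg_left _ h0
  have := Summable.sum_le_tsum (Finset.range n) (fun i _ => pow_nonneg h0 i)
    (summable_geometric_of_lt_one h0 h1)
  rwa [tsum_geometric_of_lt_one h0 h1] at this

lemma sum_pow_le {c d : ℕ} (hd : 2 ≤ d) (hdc : d ≤ c) (n : ℕ) :
    ∑ ℓ ∈ Finset.Icc 1 n, ((3:ℝ) / 2.941 ^ c) ^ ℓ ≤ ((3:ℝ)/2.941^d)/(1-3/2.941^d) := by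
  have hα1 : (1:ℝ) ≤ 2.941 := by norm_num
  have hαd : (3:ℝ) < 2.941 ^ d := by
    calc (3:ℝ) < 2.941 ^ 2 := by norm_num
      _ ≤ 2.941 ^ d := pow_le_pow_right₀ hα1 hd
  have hrd0 : (0:ℝ) ≤ 3 / 2.941 ^ d := by positivity
  have hrd1 : (3:ℝ) / 2.941 ^ d < 1 := by
    rw [div_lt_one (by positivity)]
    exact hαd
  calc ∑ ℓ ∈ Finset.Icc 1 n, ((3:ℝ) / 2.941 ^ c) ^ ℓ
      ≤ ∑ ℓ ∈ Finset.Icc 1 n, ((3:ℝ) / 2.941 ^ d) ^ ℓ := by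
        apply Finset.sum_le_sum
        intro ℓ _
        apply pow_le_pow_left₀ (by positivity)
        apply div_le_div_of_nonneg_left (by norm_num) (by positivity)
        exact pow_le_pow_right₀ hα1 hdc
    _ ≤ _ := geom_bound hrd0 hrd1 n

lemma b2_nonneg : (0:ℝ) ≤ b2 := by rw [b2]; norm_num
lemma b3_nonneg : (0:ℝ) ≤ b3 := by rw [b3]; norm_num
lemma numeric_key : (2.941:ℝ) * (b2 ^ 3 * b3) ≤ 3 - 2.941 := by rw [b2, b3]; norm_num

end Analytic

section Main

variable (e : Fin 4 → V)

lemma prod_factor_le (hd : ∀ v ∈ p, 2 ≤ p.count v) (hlen : 9 ≤ p.length)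
    (he : Function.Injective e) (hcov : ∀ v ∈ p, ∃ i, e i = v) (hel : ∀ i, e i ∈ p)
    (n : ℕ) :
    ∏ i, (∑ ℓ ∈ Finset.Icc 1 n, ((3:ℝ) / 2.941 ^ (p.count (e i))) ^ ℓ) ≤ b2 ^ 3 * b3 := by
  -- find a variable with count ≥ 3
  have hsum : ∑ i, p.count (e i) = p.length := sum_count_eq p e he hcov hel
  have hcount2 : ∀ i, 2 ≤ p.count (e i) := fun i => hd (e i) (hel i)
  have hex : ∃ i0 : Fin 4, 3 ≤ p.count (e i0) := by
    by_contra hc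
    push_neg at hc
    have : ∑ i, p.count (e i) ≤ ∑ _i : Fin 4, 2 :=
      Finset.sum_le_sum (fun i _ => by have := hc i; omega)
    simp only [Finset.sum_const, Finset.card_univ, Fintype.card_fin, smul_eq_mul] at this
    omega
  obtain ⟨i0, hi0⟩ := hex
  have hS0 : ∀ i, (0:ℝ) ≤ ∑ ℓ ∈ Finset.Icc 1 n, ((3:ℝ) / 2.941 ^ (p.count (e i))) ^ ℓ :=
    fun i => Finset.sum_nonneg (fun ℓ _ => by positivity)
  have hSb2 : ∀ i, (∑ ℓ ∈ Finset.Icc 1 n, ((3:ℝ) / 2.941 ^ (p.count (e i))) ^ ℓ) ≤ b2 := by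
    intro i
    rw [b2]
    exact sum_pow_le (le_refl 2) (hcount2 i) n
  have hSb3 : (∑ ℓ ∈ Finset.Icc 1 n, ((3:ℝ) / 2.941 ^ (p.count (e i0))) ^ ℓ) ≤ b3 := by
    rw [b3]
    exact sum_pow_le (by norm_num) hi0 n
  rw [← Finset.mul_prod_erase Finset.univ _ (Finset.mem_univ i0)]
  have hprod : (∏ i ∈ Finset.univ.erase i0,
      (∑ ℓ ∈ Finset.Icc 1 n, ((3:ℝ) / 2.941 ^ (p.count (e i))) ^ ℓ)) ≤ b2 ^ 3 := by
    calc _ ≤ ∏ _i ∈ Finset.univ.erase i0, b2 :=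
          Finset.prod_le_prod (fun i _ => hS0 i) (fun i _ => hSb2 i)
      _ = b2 ^ 3 := by
          rw [Finset.prod_const, Finset.card_erase_of_mem (Finset.mem_univ i0)]
          simp
  calc _ ≤ b3 * b2 ^ 3 := by
        apply mul_le_mul hSb3 hprod (Finset.prod_nonneg (fun i _ => hS0 i)) b3_nonneg
    _ = b2 ^ 3 * b3 := by ring

lemma step (hd : ∀ v ∈ p, 2 ≤ p.count v) (hlen : 9 ≤ p.length)
    (he : Function.Injective e) (hcov : ∀ v ∈ p, ∃ i, e i = v) (hel : ∀ i, e i ∈ p) :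
    ∀ n : ℕ, 2.941 * (a p n : ℝ) ≤ (a p (n + 1) : ℝ) := by
  intro n
  induction n using Nat.strong_induction_on with
  | _ n IH =>
  have hα : (0:ℝ) ≤ 2.941 := by norm_num
  have amono : ∀ k j, j + k ≤ n → (a p j : ℝ) * 2.941 ^ k ≤ a p (j + k) := by
    intro k
    induction k with
    | zero => intro j _; simp
    | succ k ihk =>
      intro j hjk
      have h1 := ihk j (by omega)
      have h2 := IH (j + k) (by omega)
      calc (a p j : ℝ) * 2.941 ^ (k+1) = ((a p j : ℝ) * 2.941 ^ k) * 2.941 := by ring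
        _ ≤ (a p (j+k) : ℝ) * 2.941 := mul_le_mul_of_nonneg_right h1 hα
        _ = 2.941 * (a p (j+k) : ℝ) := by ring
        _ ≤ (a p (j + (k+1)) : ℝ) := h2
  have hcount2 : ∀ i, 2 ≤ p.count (e i) := fun i => hd (e i) (hel i)
  have hterm : ∀ ℓ ∈ T p e n, ((3:ℕ) ^ (∑ i, ℓ i) * a p (n + 1 - mOf p e ℓ) : ℕ) ≤
      (a p n : ℝ) * (2.941 * ∏ i, ((3:ℝ)/2.941^(p.count (e i))) ^ (ℓ i)) := by
    intro ℓ hℓT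
    rw [T, Finset.mem_filter, Fintype.mem_piFinset] at hℓT
    obtain ⟨hbox, hmle⟩ := hℓT
    have hℓ1 : ∀ i, 1 ≤ ℓ i := fun i => (Finset.mem_Icc.mp (hbox i)).1
    have hm1 : 1 ≤ mOf p e ℓ := by
      have h01 : 2 * ℓ 0 ≤ mOf p e ℓ := by
        calc 2 * ℓ 0 ≤ p.count (e 0) * ℓ 0 := Nat.mul_le_mul_right _ (hcount2 0)
          _ ≤ mOf p e ℓ := Finset.single_le_sum (f := fun j => p.count (e j) * ℓ j)
              (fun j _ => Nat.zero_le _) (Finset.mem_univ 0)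
      have := hℓ1 0
      omega
    have hid : (2.941:ℝ) * ∏ i, ((3:ℝ)/2.941^(p.count (e i))) ^ (ℓ i)
        = (3:ℝ) ^ (∑ i, ℓ i) / 2.941 ^ (mOf p e ℓ - 1) := by
      have h1 : ∏ i, ((3:ℝ)/2.941^(p.count (e i))) ^ (ℓ i)
          = (3:ℝ) ^ (∑ i, ℓ i) / 2.941 ^ (mOf p e ℓ) := by
        rw [mOf]
        simp only [div_pow, ← pow_mul]
        rw [Finset.prod_div_distrib, Finset.prod_pow_eq_pow_sum, Finset.prod_pow_eq_pow_sum]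
      rw [h1]
      have h2 : (2.941:ℝ) ^ (mOf p e ℓ) = 2.941 ^ (mOf p e ℓ - 1) * 2.941 := by
        rw [← pow_succ]
        congr 1
        omega
      rw [h2]
      have h3 : (2.941:ℝ) ^ (mOf p e ℓ - 1) ≠ 0 := by positivity
      field_simp
    have hmono := amono (mOf p e ℓ - 1) (n + 1 - mOf p e ℓ) (by omega)
    have hidx : (n + 1 - mOf p e ℓ) + (mOf p e ℓ - 1) = n := by omega
    rw [hidx] at hmono
    have hpow : (0:ℝ) < 2.941 ^ (mOf p e ℓ - 1) := by positivity
    have hdiv : (a p (n + 1 - mOf p e ℓ) : ℝ) ≤ (a p n : ℝ) / 2.941 ^ (mOf p e ℓ - 1) :=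
      (le_div_iff₀ hpow).mpr hmono
    calc (((3:ℕ) ^ (∑ i, ℓ i) * a p (n + 1 - mOf p e ℓ) : ℕ) : ℝ)
        = (3:ℝ) ^ (∑ i, ℓ i) * (a p (n + 1 - mOf p e ℓ) : ℝ) := by push_cast; ring
      _ ≤ (3:ℝ) ^ (∑ i, ℓ i) * ((a p n : ℝ) / 2.941 ^ (mOf p e ℓ - 1)) :=
          mul_le_mul_of_nonneg_left hdiv (by positivity)
      _ = (a p n : ℝ) * ((3:ℝ) ^ (∑ i, ℓ i) / 2.941 ^ (mOf p e ℓ - 1)) := by ring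
      _ = (a p n : ℝ) * (2.941 * ∏ i, ((3:ℝ)/2.941^(p.count (e i))) ^ (ℓ i)) := by rw [hid]
  have hbadR : ((Bad p n).card : ℝ) ≤ (a p n : ℝ) * (2.941 * (b2 ^ 3 * b3)) := by
    calc ((Bad p n).card : ℝ)
        ≤ ((∑ ℓ ∈ T p e n, 3 ^ (∑ i, ℓ i) * a p (n + 1 - mOf p e ℓ) : ℕ) : ℝ) :=
          Nat.cast_le.mpr (bad_card_le p e hd hlen he hcov hel n)
      _ = ∑ ℓ ∈ T p e n, (((3:ℕ) ^ (∑ i, ℓ i) * a p (n + 1 - mOf p e ℓ) : ℕ) : ℝ) := by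
          push_cast; ring
      _ ≤ ∑ ℓ ∈ T p e n, (a p n : ℝ) * (2.941 * ∏ i, ((3:ℝ)/2.941^(p.count (e i))) ^ (ℓ i)) :=
          Finset.sum_le_sum hterm
      _ = ((a p n : ℝ) * 2.941) * ∑ ℓ ∈ T p e n, ∏ i, ((3:ℝ)/2.941^(p.count (e i))) ^ (ℓ i) := by
          rw [Finset.mul_sum]
          apply Finset.sum_congr rfl
          intro ℓ _
          ring
      _ ≤ ((a p n : ℝ) * 2.941) * ∑ ℓ ∈ Fintype.piFinset (fun _ : Fin 4 => Finset.Icc 1 n),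
            ∏ i, ((3:ℝ)/2.941^(p.count (e i))) ^ (ℓ i) := by
          apply mul_le_mul_of_nonneg_left _ (by positivity)
          apply Finset.sum_le_sum_of_subset_of_nonneg (Finset.filter_subset _ _)
          intro ℓ _ _
          positivity
      _ = ((a p n : ℝ) * 2.941) * ∏ i, ∑ ℓ ∈ Finset.Icc 1 n, ((3:ℝ)/2.941^(p.count (e i))) ^ ℓ := by
          rw [Finset.prod_univ_sum]
      _ ≤ ((a p n : ℝ) * 2.941) * (b2 ^ 3 * b3) := by
          apply mul_le_mul_of_nonneg_left (prod_factor_le p e hd hlen he hcov hel n) (by positivity)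
      _ = (a p n : ℝ) * (2.941 * (b2 ^ 3 * b3)) := by ring
  have h3 : (3:ℝ) * (a p n : ℝ) ≤ (a p (n+1) : ℝ) + ((Bad p n).card : ℝ) := by
    exact_mod_cast three_mul_le p n
  have hnn : (0:ℝ) ≤ (a p n : ℝ) := Nat.cast_nonneg _
  have hmul := mul_le_mul_of_nonneg_left numeric_key hnn
  linarith

lemma a_growth (hd : ∀ v ∈ p, 2 ≤ p.count v) (hlen : 9 ≤ p.length)
    (he : Function.Injective e) (hcov : ∀ v ∈ p, ∃ i, e i = v) (hel : ∀ i, e i ∈ p) :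
    ∀ n : ℕ, (2.941:ℝ) ^ n ≤ (a p n : ℝ) := by
  intro n
  induction n with
  | zero =>
    rw [a_zero p (by intro h; rw [h] at hlen; simp at hlen)]
    simp
  | succ n ih =>
    calc (2.941:ℝ) ^ (n+1) = 2.941 * 2.941 ^ n := by ring
      _ ≤ 2.941 * (a p n : ℝ) := by
          apply mul_le_mul_of_nonneg_left ih (by norm_num)
      _ ≤ (a p (n+1) : ℝ) := step p e hd hlen he hcov hel n


/-- `w` has avoiding extensions of every length -/
def Good (w : List K) : Prop :=
  ∀ N : ℕ, ∃ u : List K, w <+: u ∧ u.length = w.length + N ∧ ¬ Occurs p u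

lemma good_nil (hA : ∀ N, (A p N).Nonempty) : Good p [] := by
  intro N
  obtain ⟨u, hu⟩ := hA N
  rw [mem_A] at hu
  exact ⟨u, List.nil_prefix, by simp [hu.1], hu.2⟩

lemma good_step {w : List K} (hw : Good p w) : ∃ c : K, Good p (w ++ [c]) := by
  by_contra hc
  push_neg at hc
  have hc' : ∀ c : K, ∃ N : ℕ, ∀ u : List K,
      (w ++ [c]) <+: u → u.length = (w ++ [c]).length + N → Occurs p u := by
    intro c
    have := hc c
    rw [Good] at this
    push_neg at this
    obtain ⟨N, hN⟩ := this
    exact ⟨N, fun u h1 h2 => hN u h1 h2⟩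
  choose N hN using hc'
  set M := ∑ i, N i with hM
  obtain ⟨u, hpre, hulen, havoid⟩ := hw (M + 1)
  obtain ⟨t, rfl⟩ := hpre
  rcases t with - | ⟨c, t'⟩
  · simp at hulen
  · have hNle : N c ≤ M := by
      rw [hM]
      exact Finset.single_le_sum (fun i _ => Nat.zero_le _) (Finset.mem_univ c)
    set u' := (w ++ c :: t').take (w.length + 1 + N c) with hu'
    have hlen2 : (w ++ c :: t').length = w.length + 1 + M := by
      simp at hulen ⊢
      omega
    have hassoc : w ++ c :: t' = (w ++ [c]) ++ t' := by simp
    have hpre2 : (w ++ [c]) <+: u' := by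
      rw [hu', hassoc]
      have h1 : ((w ++ [c]) ++ t').take (w.length + 1) = w ++ [c] := by
        rw [List.take_append_of_le_length (by simp), List.take_of_length_le (by simp)]
      calc w ++ [c] = ((w ++ [c]) ++ t').take (w.length + 1) := h1.symm
        _ <+: ((w ++ [c]) ++ t').take (w.length + 1 + N c) :=
            List.take_isPrefix_take.mpr (Or.inl (by omega))
    have hlen3 : u'.length = (w ++ [c]).length + N c := by
      rw [hu', List.length_take, hlen2]
      simp
      omega
    have hocc := hN c u' hpre2 hlen3
    exact havoid (occurs_of_infix hocc (List.take_prefix _ _).isInfix)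

lemma avoids_of_good {w : List K} (hw : Good p w) : ¬ Occurs p w := by
  obtain ⟨u, h1, h2, h3⟩ := hw 0
  have : w = u := List.IsPrefix.eq_of_length h1 (by omega)
  rwa [this]

lemma exists_infinite_word (hA : ∀ N, (A p N).Nonempty) :
    ∃ f : ℕ → K, ∀ n : ℕ, ¬ Occurs p (List.ofFn fun i : Fin n => f i) := by
  have hstep : ∀ w : {w : List K // Good p w}, ∃ c : K, Good p (w.1 ++ [c]) :=
    fun w => good_step p w.2
  let g : ℕ → {w : List K // Good p w} := fun n =>
    Nat.rec ⟨[], good_nil p hA⟩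
      (fun _ prev => ⟨prev.1 ++ [(hstep prev).choose], (hstep prev).choose_spec⟩) n
  let f : ℕ → K := fun n => (hstep (g n)).choose
  have hg : ∀ n, (g (n+1)).1 = (g n).1 ++ [f n] := fun n => rfl
  have hofn : ∀ n, (List.ofFn fun i : Fin n => f i) = (g n).1 := by
    intro n
    induction n with
    | zero => rfl
    | succ n ih =>
      rw [List.ofFn_succ', hg n, List.concat_eq_append, ← ih]
  refine ⟨f, fun n => ?_⟩
  rw [hofn n]
  exact avoids_of_good p (g n).2

end Main

end DPA

/-- Every doubled pattern with exactly 4 distinct variables and length at least 9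
is 3-avoidable; moreover, if its length is exactly 9 then for every `n` there are
at least `2.941 ^ n` ternary words of length `n` avoiding it. -/
theorem doubled_four_vars_length_ge_nine {V : Type*} [DecidableEq V]
    (p : List V) (hd : Doubled p) (hv : p.toFinset.card = 4) (hlen : 9 ≤ p.length) :
    IsKAvoidable 3 p ∧
    (p.length = 9 → ∀ n : ℕ,
      (2.941 : ℝ) ^ n ≤
        (Set.ncard {w : List (Fin 3) | w.length = n ∧ ¬ Occurs p w} : ℝ)) := by
  classical
  have eqv : {x // x ∈ p.toFinset} ≃ Fin 4 := Finset.equivFinOfCardEq hv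
  set e : Fin 4 → V := fun i => (eqv.symm i : V) with hedef
  have he : Function.Injective e := by
    intro i j hij
    exact eqv.symm.injective (Subtype.ext hij)
  have hel : ∀ i, e i ∈ p := fun i => List.mem_toFinset.mp (eqv.symm i).2
  have hcov : ∀ v ∈ p, ∃ i, e i = v := by
    intro v hv'
    refine ⟨eqv ⟨v, List.mem_toFinset.mpr hv'⟩, ?_⟩
    rw [hedef]
    simp
  have hd' : ∀ v ∈ p, 2 ≤ p.count v := hd
  have hgrow := DPA.a_growth p e hd' hlen he hcov hel
  have hAn : ∀ n, (DPA.A p n).Nonempty := by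
    intro n
    have h1 : (0:ℝ) < (DPA.a p n : ℝ) := lt_of_lt_of_le (by positivity) (hgrow n)
    have h2 : 0 < DPA.a p n := by exact_mod_cast h1
    exact Finset.card_pos.mp h2
  constructor
  · obtain ⟨f, hf⟩ := DPA.exists_infinite_word p hAn
    exact ⟨f, hf⟩
  · intro _ n
    have hset : {w : List (Fin 3) | w.length = n ∧ ¬ Occurs p w} = ↑(DPA.A p n) := by
      ext w
      simp [DPA.mem_A]
    rw [hset, Set.ncard_coe_finset]
    exact hgrow n
end

section
/- Every doubled pattern with exactly 5 distinct variables and length at least 11 is 3-avoidable. -/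
set_option linter.unusedSectionVars false

namespace DPaux

attribute [local instance] Classical.propDecidable

/-- all ternary words of length n -/
def allW (n : ℕ) : Finset (List (Fin 3)) :=
  (Finset.univ : Finset (Fin n → Fin 3)).image List.ofFn

lemma mem_allW {n : ℕ} {w : List (Fin 3)} : w ∈ allW n ↔ w.length = n := by
  constructor
  · rintro hw
    simp only [allW, Finset.mem_image] at hw
    obtain ⟨f, -, rfl⟩ := hw
    simp
  · rintro rfl
    simp only [allW, Finset.mem_image]
    exact ⟨w.get, Finset.mem_univ _, List.ofFn_get w⟩

lemma card_allW (n : ℕ) : (allW n).card = 3 ^ n := by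
  rw [allW, Finset.card_image_of_injective _ List.ofFn_injective]
  simp

variable {V : Type*} [DecidableEq V] (p : List V)

/-- words of length n avoiding p -/
noncomputable def Av (n : ℕ) : Finset (List (Fin 3)) :=
  (allW n).filter (fun w => ¬ Occurs p w)

noncomputable def A (n : ℕ) : ℕ := (Av p n).card

lemma occurs_of_infix {u w : List (Fin 3)} (h : Occurs p u) (hi : u <:+: w) :
    Occurs p w := by
  obtain ⟨h, hne, hinf⟩ := h
  exact ⟨h, hne, hinf.trans hi⟩

lemma mem_Av {n : ℕ} {w : List (Fin 3)} :
    w ∈ Av p n ↔ w.length = n ∧ ¬ Occurs p w := by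
  simp [Av, mem_allW]

lemma bad_decomp {w : List (Fin 3)} (h1 : Occurs p w) (h2 : ¬ Occurs p w.dropLast) :
    ∃ u h, (∀ v, h v ≠ ([] : List (Fin 3))) ∧ w = u ++ p.flatMap h := by
  obtain ⟨h, hne, s, t, hst⟩ := h1
  rcases t with _ | ⟨x, t'⟩
  · exact ⟨s, h, hne, by simpa using hst.symm⟩
  · exfalso
    apply h2
    refine ⟨h, hne, s, (x :: t').dropLast, ?_⟩
    rw [← hst, List.dropLast_append_of_ne_nil (l := x :: t') (by simp)]

lemma unflatten (L : List V) (h h' : V → List (Fin 3))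
    (hlen : ∀ v ∈ L, (h v).length = (h' v).length)
    (heq : L.flatMap h = L.flatMap h') : ∀ v ∈ L, h v = h' v := by
  induction L with
  | nil => simp
  | cons a L ih =>
    simp only [List.flatMap_cons] at heq
    obtain ⟨h1, h2⟩ := List.append_inj heq (hlen a (by simp))
    intro v hv
    rcases List.mem_cons.mp hv with rfl | hv
    · exact h1
    · exact ih (fun v hv => hlen v (by simp [hv])) h2 v hv

lemma length_flatMap_eq (h : V → List (Fin 3)) :
    (p.flatMap h).length = ∑ v ∈ p.toFinset, p.count v * (h v).length := by
  rw [List.length_flatMap, Finset.sum_list_map_count]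
  simp [Function.comp]

end DPaux

namespace DPaux

attribute [local instance] Classical.propDecidable

variable {V : Type*} [DecidableEq V] (p : List V)

lemma sum_count_toFinset : ∑ v ∈ p.toFinset, p.count v = p.length := by
  simpa using Multiset.toFinset_sum_count_eq (↑p : Multiset V)

lemma flatMap_congr {α : Type*} (L : List V) (h h' : V → List α)
    (H : ∀ v ∈ L, h v = h' v) : L.flatMap h = L.flatMap h' := by
  induction L with
  | nil => rfl
  | cons a L ih =>
    simp only [List.flatMap_cons]
    rw [H a (by simp), ih (fun v hv => H v (by simp [hv]))]

noncomputable def mOf (ℓ : ↥p.toFinset → ℕ) : ℕ := ∑ v : ↥p.toFinset, p.count ↑v * ℓ v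

noncomputable def sOf (ℓ : ↥p.toFinset → ℕ) : ℕ := ∑ v : ↥p.toFinset, ℓ v

noncomputable def idx (N : ℕ) : Finset (↥p.toFinset → ℕ) :=
  (Fintype.piFinset fun _ => Finset.Icc 1 N).filter (fun ℓ => mOf p ℓ ≤ N)

noncomputable def ext (N : ℕ) (ℓ : ↥p.toFinset → ℕ) : Finset (List (Fin 3)) :=
  (allW ((N - mOf p ℓ) + sOf p ℓ)).filter (fun z => ¬ Occurs p (z.take (N - mOf p ℓ)))

lemma card_ext (N : ℕ) (ℓ : ↥p.toFinset → ℕ) :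
    (ext p N ℓ).card = A p (N - mOf p ℓ) * 3 ^ (sOf p ℓ) := by
  classical
  set k := N - mOf p ℓ
  set s := sOf p ℓ
  have hcp : A p k * 3 ^ s = ((Av p k) ×ˢ (allW s)).card := by
    rw [Finset.card_product, card_allW]; rfl
  rw [hcp]
  refine Finset.card_bij' (fun z _ => (z.take k, z.drop k)) (fun uz _ => uz.1 ++ uz.2) ?_ ?_ ?_ ?_
  · intro z hz
    simp only [ext, Finset.mem_filter, mem_allW] at hz
    simp only [Finset.mem_product, mem_Av, mem_allW]
    refine ⟨⟨?_, hz.2⟩, ?_⟩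
    · rw [List.length_take]; omega
    · rw [List.length_drop]; omega
  · intro uz huz
    simp only [Finset.mem_product, mem_Av, mem_allW] at huz
    simp only [ext, Finset.mem_filter, mem_allW]
    rw [List.take_left' huz.1.1, List.length_append]
    exact ⟨by omega, huz.1.2⟩
  · intro z _; exact List.take_append_drop k z
  · intro uz huz
    simp only [Finset.mem_product, mem_Av, mem_allW] at huz
    simp only [List.take_left' huz.1.1, List.drop_left' huz.1.1]

lemma card_dropLast (n : ℕ) :
    ((allW (n + 1)).filter (fun w => ¬ Occurs p w.dropLast)).card = 3 * A p n := by
  classical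
  have : 3 * A p n = ((Av p n) ×ˢ (Finset.univ : Finset (Fin 3))).card := by
    rw [Finset.card_product]; simp [A, mul_comm]
  rw [this]
  symm
  refine Finset.card_bij (fun ua _ => ua.1 ++ [ua.2]) ?h1 ?h2 ?h3
  case h1 =>
    intro ua hua
    simp only [Finset.mem_product, mem_Av] at hua
    obtain ⟨⟨h1, h2⟩, -⟩ := hua
    simp only [Finset.mem_filter, mem_allW, List.length_append, List.dropLast_concat]
    exact ⟨by simp [h1], h2⟩
  case h2 =>
    intro ua hua ub hub heq
    have h1 := congrArg List.dropLast heq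
    simp only [List.dropLast_concat] at h1
    have h2 : ua.2 = ub.2 := by
      have := congrArg (fun l => List.getLast? l) heq
      simpa [List.getLast?_append] using this
    exact Prod.ext h1 h2
  case h3 =>
    intro w hw
    simp only [Finset.mem_filter, mem_allW] at hw
    have hne : w ≠ [] := by
      intro h; rw [h] at hw; simp at hw
    refine ⟨(w.dropLast, w.getLast hne), ?_, List.dropLast_append_getLast hne⟩
    simp only [Finset.mem_product, mem_Av, Finset.mem_univ, and_true]
    constructor
    · rw [List.length_dropLast, hw.1]; omega
    · exact hw.2

end DPaux

namespace DPaux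

attribute [local instance] Classical.propDecidable

variable {V : Type*} [DecidableEq V] (p : List V)

noncomputable def decompUH (w : List (Fin 3)) : List (Fin 3) × (V → List (Fin 3)) :=
  if hw : ∃ u h, (∀ v, h v ≠ ([] : List (Fin 3))) ∧ w = u ++ p.flatMap h then
    (hw.choose, hw.choose_spec.choose)
  else ([], fun _ => [])

lemma decompUH_spec {w : List (Fin 3)}
    (hw : ∃ u h, (∀ v, h v ≠ ([] : List (Fin 3))) ∧ w = u ++ p.flatMap h) :
    (∀ v, (decompUH p w).2 v ≠ []) ∧ w = (decompUH p w).1 ++ p.flatMap (decompUH p w).2 := by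
  rw [decompUH, dif_pos hw]
  exact hw.choose_spec.choose_spec

/-- facts about the decomposition of a bad word -/
lemma decomp_facts {n : ℕ} {w : List (Fin 3)} (hw1 : w.length = n + 1)
    (hw2 : ¬ Occurs p w.dropLast) (hw3 : Occurs p w) :
    ∀ u h, ((∀ v, h v ≠ ([] : List (Fin 3))) ∧ w = u ++ p.flatMap h) →
    (p.flatMap h).length = mOf p (fun v => (h ↑v).length)
    ∧ p.length ≤ mOf p (fun v => (h ↑v).length)
    ∧ mOf p (fun v => (h ↑v).length) ≤ n + 1
    ∧ (p.toFinset.toList.flatMap h).length = sOf p (fun v => (h ↑v).length)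
    ∧ u.length = (n + 1) - mOf p (fun v => (h ↑v).length) := by
  intro u h ⟨hne, hwe⟩
  have hm : (p.flatMap h).length = mOf p (fun v => (h ↑v).length) := by
    rw [length_flatMap_eq]
    exact (Finset.sum_coe_sort p.toFinset (fun v => p.count v * (h v).length)).symm
  have hwlen : u.length + (p.flatMap h).length = n + 1 := by
    rw [← List.length_append, ← hwe, hw1]
  have hple : p.length ≤ mOf p (fun v => (h ↑v).length) := by
    rw [← sum_count_toFinset p, ← Finset.sum_coe_sort p.toFinset (fun v => p.count v)]
    show ∑ v : ↥p.toFinset, p.count ↑v ≤ ∑ v : ↥p.toFinset, p.count ↑v * (h ↑v).length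
    apply Finset.sum_le_sum
    intro v _
    have h1 : 0 < (h ↑v).length := List.length_pos_iff.mpr (hne ↑v)
    exact Nat.le_mul_of_pos_right _ h1
  have hsl : (p.toFinset.toList.flatMap h).length = sOf p (fun v => (h ↑v).length) := by
    rw [List.length_flatMap]
    show _ = ∑ v : ↥p.toFinset, (h ↑v).length
    rw [Finset.sum_coe_sort p.toFinset (fun v => (h v).length), ← Finset.sum_map_toList]
  exact ⟨hm, hple, by omega, hsl, by omega⟩

lemma card_bad_le (hp : 1 ≤ p.length) (n : ℕ) :
    ((allW (n + 1)).filter (fun w => ¬ Occurs p w.dropLast ∧ Occurs p w)).card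
      ≤ ∑ ℓ ∈ idx p (n + 1), A p ((n + 1) - mOf p ℓ) * 3 ^ (sOf p ℓ) := by
  classical
  have hsig : ∑ ℓ ∈ idx p (n + 1), A p ((n + 1) - mOf p ℓ) * 3 ^ (sOf p ℓ)
      = ((idx p (n + 1)).sigma (ext p (n + 1))).card := by
    rw [Finset.card_sigma]
    exact Finset.sum_congr rfl (fun ℓ _ => (card_ext p (n + 1) ℓ).symm)
  rw [hsig]
  apply Finset.card_le_card_of_injOn
    (fun w => ⟨fun v => (((decompUH p w).2) ↑v).length,
      (decompUH p w).1 ++ p.toFinset.toList.flatMap (decompUH p w).2⟩)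
  · -- maps to
    intro w hw
    simp only [Finset.mem_coe, Finset.mem_filter, mem_allW] at hw
    obtain ⟨hw1, hw2, hw3⟩ := hw
    have hex := bad_decomp p hw3 hw2
    have hspec := decompUH_spec p hex
    set u := (decompUH p w).1
    set h := (decompUH p w).2
    obtain ⟨hne, hwe⟩ := hspec
    obtain ⟨hm, hple, hmle, hsl, hul⟩ := decomp_facts p hw1 hw2 hw3 u h ⟨hne, hwe⟩
    set ℓ : ↥p.toFinset → ℕ := fun v => (h ↑v).length with hℓdef
    simp only [Finset.mem_coe, Finset.mem_sigma]
    constructor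
    · -- index membership
      simp only [idx, Finset.mem_filter, Fintype.mem_piFinset, Finset.mem_Icc]
      refine ⟨fun v => ⟨List.length_pos_iff.mpr (hne ↑v), ?_⟩, hmle⟩
      have hc : 1 ≤ p.count ↑v := List.count_pos_iff.mpr (List.mem_toFinset.mp v.2)
      have h1 : ℓ v ≤ p.count ↑v * ℓ v := Nat.le_mul_of_pos_left _ hc
      have h2 : p.count ↑v * ℓ v ≤ mOf p ℓ := by
        rw [mOf]
        exact Finset.single_le_sum (f := fun v : ↥p.toFinset => p.count ↑v * ℓ v)
          (fun _ _ => Nat.zero_le _) (Finset.mem_univ v)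
      have h3 : ℓ v = ((decompUH p w).2 ↑v).length := rfl
      omega
    · -- ext membership
      simp only [ext, Finset.mem_filter, mem_allW]
      have htake : (u ++ p.toFinset.toList.flatMap h).take ((n + 1) - mOf p ℓ) = u :=
        List.take_left' hul
      constructor
      · rw [List.length_append, hsl, hul]
      · rw [htake]
        intro hocc
        apply hw2
        apply occurs_of_infix p hocc
        apply List.IsPrefix.isInfix
        have h1 : u = w.take u.length := by
          rw [hwe, List.take_left' rfl]
        have h2 : w.dropLast = w.take n := by
          rw [List.dropLast_eq_take, hw1]; simp
        have h3 : u.length ≤ n := by omega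
        have h4 : u = (w.take n).take u.length := by
          rw [List.take_take, min_eq_left h3]; exact h1
        rw [h2, h4]
        exact List.take_prefix _ _
  · -- injective
    intro w hw w' hw' heq
    simp only [Finset.mem_coe, Finset.mem_filter, mem_allW] at hw hw'
    obtain ⟨hw1, hw2, hw3⟩ := hw
    obtain ⟨hw1', hw2', hw3'⟩ := hw'
    have hspec := decompUH_spec p (bad_decomp p hw3 hw2)
    have hspec' := decompUH_spec p (bad_decomp p hw3' hw2')
    set u := (decompUH p w).1
    set h := (decompUH p w).2
    set u' := (decompUH p w').1
    set h' := (decompUH p w').2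
    obtain ⟨hne, hwe⟩ := hspec
    obtain ⟨hne', hwe'⟩ := hspec'
    obtain ⟨hm, hple, hmle, hsl, hul⟩ := decomp_facts p hw1 hw2 hw3 u h ⟨hne, hwe⟩
    obtain ⟨hm', hple', hmle', hsl', hul'⟩ := decomp_facts p hw1' hw2' hw3' u' h' ⟨hne', hwe'⟩
    have hfst : (fun v : ↥p.toFinset => (h ↑v).length)
        = (fun v : ↥p.toFinset => (h' ↑v).length) :=
      congrArg Sigma.fst heq
    have hlen : ∀ v ∈ p.toFinset, (h v).length = (h' v).length := by
      intro v hv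
      exact congrFun hfst ⟨v, hv⟩
    have hsnd : u ++ p.toFinset.toList.flatMap h = u' ++ p.toFinset.toList.flatMap h' :=
      congrArg Sigma.snd heq
    have hmeq : mOf p (fun v : ↥p.toFinset => (h ↑v).length)
        = mOf p (fun v => (h' ↑v).length) := by rw [hfst]
    have huu : u.length = u'.length := by omega
    obtain ⟨hueq, hfeq⟩ := List.append_inj hsnd huu
    have hhv : ∀ v ∈ p.toFinset.toList, h v = h' v :=
      unflatten _ _ _ (fun v hv => hlen v (Finset.mem_toList.mp hv)) hfeq
    have : p.flatMap h = p.flatMap h' := by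
      apply flatMap_congr
      intro v hv
      exact hhv v (Finset.mem_toList.mpr (List.mem_toFinset.mpr hv))
    rw [hwe, hwe', hueq, this]

end DPaux

namespace DPaux

attribute [local instance] Classical.propDecidable

variable {V : Type*} [DecidableEq V] (p : List V)

lemma split_eq (hp : 1 ≤ p.length) (n : ℕ) :
    A p (n + 1)
      + ((allW (n + 1)).filter (fun w => ¬ Occurs p w.dropLast ∧ Occurs p w)).card
      = 3 * A p n := by
  classical
  rw [← card_dropLast p n]
  rw [← Finset.card_filter_add_card_filter_not
    (s := (allW (n + 1)).filter (fun w => ¬ Occurs p w.dropLast)) (fun w => Occurs p w)]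
  have e1 : ((allW (n + 1)).filter (fun w => ¬ Occurs p w.dropLast)).filter
        (fun w => Occurs p w)
      = (allW (n + 1)).filter (fun w => ¬ Occurs p w.dropLast ∧ Occurs p w) := by
    rw [Finset.filter_filter]
  have e2 : ((allW (n + 1)).filter (fun w => ¬ Occurs p w.dropLast)).filter
        (fun w => ¬ Occurs p w)
      = Av p (n + 1) := by
    rw [Finset.filter_filter]
    apply Finset.ext
    intro w
    simp only [Finset.mem_filter, Av, mem_allW]
    constructor
    · rintro ⟨h1, -, h3⟩; exact ⟨h1, h3⟩
    · rintro ⟨h1, h2⟩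
      refine ⟨h1, fun hocc => h2 ?_, h2⟩
      exact occurs_of_infix p hocc (List.dropLast_prefix w).isInfix
  rw [e1, e2]
  unfold A
  omega

end DPaux

namespace DPaux

attribute [local instance] Classical.propDecidable

variable {V : Type*} [DecidableEq V] (p : List V)

lemma chain_le {n : ℕ} (H : ∀ i < n, 5 * A p i ≤ 2 * A p (i + 1)) :
    ∀ j k, k + j ≤ n → 5 ^ j * A p k ≤ 2 ^ j * A p (k + j) := by
  intro j
  induction j with
  | zero => intro k _; simp
  | succ j ih =>
    intro k hk
    have h1 : 5 ^ j * A p k ≤ 2 ^ j * A p (k + j) := ih k (by omega)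
    have h2 : 5 * A p (k + j) ≤ 2 * A p (k + j + 1) := H (k + j) (by omega)
    calc 5 ^ (j + 1) * A p k = 5 * (5 ^ j * A p k) := by ring
      _ ≤ 5 * (2 ^ j * A p (k + j)) := Nat.mul_le_mul_left _ h1
      _ = 2 ^ j * (5 * A p (k + j)) := by ring
      _ ≤ 2 ^ j * (2 * A p (k + j + 1)) := Nat.mul_le_mul_left _ h2
      _ = 2 ^ (j + 1) * A p (k + (j + 1)) := by ring_nf

lemma geom_le (q : ℚ) (h0 : 0 ≤ q) (h1 : q < 1) (N : ℕ) :
    ∑ i ∈ Finset.Icc 1 N, q ^ i ≤ q / (1 - q) := by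
  have key : ∀ M : ℕ, (1 - q) * ∑ i ∈ Finset.Icc 1 M, q ^ i = q - q ^ (M + 1) := by
    intro M
    induction M with
    | zero => simp
    | succ M ih =>
      rw [Finset.sum_Icc_succ_top (by omega), mul_add, ih]
      ring
  have h2 : 0 < 1 - q := by linarith
  rw [le_div_iff₀ h2]
  have h3 : (0:ℚ) ≤ q ^ (N + 1) := pow_nonneg h0 _
  nlinarith [key N]

/-- the per-variable weight -/
def qq (c : ℕ) : ℚ := 3 * (2 / 5) ^ c

lemma qq_nonneg (c : ℕ) : 0 ≤ qq c := by
  rw [qq]; positivity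

lemma qq_le_two (hc : 2 ≤ c) : qq c ≤ 12 / 25 := by
  have : (2 / 5 : ℚ) ^ c ≤ (2 / 5) ^ 2 :=
    pow_le_pow_of_le_one (by norm_num) (by norm_num) hc
  rw [qq]
  nlinarith
  
lemma qq_le_three (hc : 3 ≤ c) : qq c ≤ 24 / 125 := by
  have : (2 / 5 : ℚ) ^ c ≤ (2 / 5) ^ 3 :=
    pow_le_pow_of_le_one (by norm_num) (by norm_num) hc
  rw [qq]
  nlinarith

lemma g_nonneg (c : ℕ) (hc : 2 ≤ c) : 0 ≤ qq c / (1 - qq c) := by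
  have h1 := qq_le_two hc
  have h0 := qq_nonneg c
  apply div_nonneg h0
  linarith

lemma g_le_two (c : ℕ) (hc : 2 ≤ c) : qq c / (1 - qq c) ≤ 12 / 13 := by
  have h1 := qq_le_two hc
  have h0 := qq_nonneg c
  have h13 : (12 : ℚ) / 13 = (12 / 25) / (13 / 25) := by norm_num
  rw [h13]
  apply div_le_div₀ (by norm_num) h1 (by norm_num)
  linarith

lemma g_le_three (c : ℕ) (hc : 3 ≤ c) : qq c / (1 - qq c) ≤ 24 / 101 := by
  have h1 := qq_le_three hc
  have h0 := qq_nonneg c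
  have h13 : (24 : ℚ) / 101 = (24 / 125) / (101 / 125) := by norm_num
  rw [h13]
  apply div_le_div₀ (by norm_num) h1 (by norm_num)
  linarith

lemma qq_lt_one (c : ℕ) (hc : 2 ≤ c) : qq c < 1 := by
  have := qq_le_two hc
  linarith

end DPaux

namespace DPaux

attribute [local instance] Classical.propDecidable

variable {V : Type*} [DecidableEq V] (p : List V)

lemma mOf_ge (ℓ : ↥p.toFinset → ℕ) (hℓ : ∀ v, 1 ≤ ℓ v) : p.length ≤ mOf p ℓ := by
  rw [← sum_count_toFinset p, ← Finset.sum_coe_sort p.toFinset (fun v => p.count v)]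
  show ∑ v : ↥p.toFinset, p.count ↑v ≤ ∑ v : ↥p.toFinset, p.count ↑v * ℓ v
  apply Finset.sum_le_sum
  intro v _
  exact Nat.le_mul_of_pos_right _ (hℓ v)

lemma step_main (hd : Doubled p) (hv : p.toFinset.card = 5) (hlen : 11 ≤ p.length)
    (n : ℕ) (H : ∀ i < n, 5 * A p i ≤ 2 * A p (i + 1)) :
    5 * A p n ≤ 2 * A p (n + 1) := by
  classical
  have hp1 : 1 ≤ p.length := by omega
  have hsplit := split_eq p hp1 n
  suffices hB :
      2 * ((allW (n + 1)).filter (fun w => ¬ Occurs p w.dropLast ∧ Occurs p w)).card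
        ≤ A p n by omega
  have hBle := card_bad_le p hp1 n
  have hc2 : ∀ v : ↥p.toFinset, 2 ≤ p.count ↑v := fun v => hd _ (List.mem_toFinset.mp v.2)
  have hcard : Fintype.card ↥p.toFinset = 5 := by rw [Fintype.card_coe, hv]
  have hex3 : ∃ v0 : ↥p.toFinset, 3 ≤ p.count ↑v0 := by
    by_contra hco
    push_neg at hco
    have hle : p.length ≤ 10 := by
      rw [← sum_count_toFinset p, ← Finset.sum_coe_sort p.toFinset (fun v => p.count v)]
      calc ∑ v : ↥p.toFinset, p.count ↑v
          ≤ ∑ _v : ↥p.toFinset, 2 :=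
            Finset.sum_le_sum (fun v _ => by have := hco v; omega)
        _ = 10 := by simp [Finset.card_univ, hcard, hv]
    omega
  obtain ⟨v0, hv0⟩ := hex3
  -- the key per-term bound
  have key : ∀ ℓ ∈ idx p (n + 1),
      ((A p ((n + 1) - mOf p ℓ) * 3 ^ (sOf p ℓ) : ℕ) : ℚ)
        ≤ (5 / 2) * (∏ v : ↥p.toFinset, qq (p.count ↑v) ^ ℓ v) * A p n := by
    intro ℓ hℓ
    simp only [idx, Finset.mem_filter, Fintype.mem_piFinset, Finset.mem_Icc] at hℓ
    obtain ⟨hℓi, hmle⟩ := hℓ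
    have hm11 : 11 ≤ mOf p ℓ := le_trans hlen (mOf_ge p ℓ (fun v => (hℓi v).1))
    obtain ⟨m', hm'⟩ : ∃ m', mOf p ℓ = m' + 1 := ⟨mOf p ℓ - 1, by omega⟩
    have hchain := chain_le p H m' ((n + 1) - mOf p ℓ) (by omega)
    have hkj : (n + 1) - mOf p ℓ + m' = n := by omega
    rw [hkj] at hchain
    -- cast to ℚ
    have hchainQ : (A p ((n + 1) - mOf p ℓ) : ℚ) ≤ (2 / 5) ^ m' * A p n := by
      rw [div_pow, div_mul_eq_mul_div, le_div_iff₀ (by positivity)]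
      calc (A p ((n + 1) - mOf p ℓ) : ℚ) * 5 ^ m'
          = ((5 ^ m' * A p ((n + 1) - mOf p ℓ) : ℕ) : ℚ) := by push_cast; ring
        _ ≤ ((2 ^ m' * A p n : ℕ) : ℚ) := by exact_mod_cast hchain
        _ = (2 : ℚ) ^ m' * A p n := by push_cast; ring
    -- identity
    have hid : ((2 : ℚ) / 5) ^ m' * 3 ^ (sOf p ℓ)
        = (5 / 2) * ∏ v : ↥p.toFinset, qq (p.count ↑v) ^ ℓ v := by
      have e1 : ((2 : ℚ) / 5) ^ m' = (5 / 2) * (2 / 5) ^ (mOf p ℓ) := by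
        rw [hm', pow_succ]
        ring
      rw [e1, mOf, sOf, ← Finset.prod_pow_eq_pow_sum, ← Finset.prod_pow_eq_pow_sum,
        mul_assoc, ← Finset.prod_mul_distrib]
      congr 1
      apply Finset.prod_congr rfl
      intro v _
      rw [qq, mul_pow, ← pow_mul]
      ring
    calc ((A p ((n + 1) - mOf p ℓ) * 3 ^ (sOf p ℓ) : ℕ) : ℚ)
        = (A p ((n + 1) - mOf p ℓ) : ℚ) * 3 ^ (sOf p ℓ) := by push_cast; ring
      _ ≤ ((2 / 5) ^ m' * A p n) * 3 ^ (sOf p ℓ) := by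
          apply mul_le_mul_of_nonneg_right hchainQ (by positivity)
      _ = ((2 / 5) ^ m' * 3 ^ (sOf p ℓ)) * A p n := by ring
      _ = (5 / 2) * (∏ v : ↥p.toFinset, qq (p.count ↑v) ^ ℓ v) * A p n := by rw [hid]
  -- sum the key bound
  have hsum : ((∑ ℓ ∈ idx p (n + 1), A p ((n + 1) - mOf p ℓ) * 3 ^ (sOf p ℓ) : ℕ) : ℚ)
      ≤ (5 / 2) * (∏ v : ↥p.toFinset, (qq (p.count ↑v) / (1 - qq (p.count ↑v)))) * A p n := by
    push_cast
    calc ∑ ℓ ∈ idx p (n + 1), ((A p ((n + 1) - mOf p ℓ) : ℚ) * 3 ^ (sOf p ℓ))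
        ≤ ∑ ℓ ∈ idx p (n + 1),
            (5 / 2) * (∏ v : ↥p.toFinset, qq (p.count ↑v) ^ ℓ v) * (A p n : ℚ) := by
          apply Finset.sum_le_sum
          intro ℓ hℓ
          have := key ℓ hℓ
          push_cast at this
          exact this
      _ ≤ ∑ ℓ ∈ Fintype.piFinset (fun _ : ↥p.toFinset => Finset.Icc 1 (n + 1)),
            (5 / 2) * (∏ v : ↥p.toFinset, qq (p.count ↑v) ^ ℓ v) * (A p n : ℚ) := by
          apply Finset.sum_le_sum_of_subset_of_nonneg
          · intro ℓ hℓ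
            simp only [idx, Finset.mem_filter] at hℓ
            exact hℓ.1
          · intro ℓ _ _
            have : (0:ℚ) ≤ ∏ v : ↥p.toFinset, qq (p.count ↑v) ^ ℓ v :=
              Finset.prod_nonneg (fun v _ => pow_nonneg (qq_nonneg _) _)
            positivity
      _ = (5 / 2) * (∑ ℓ ∈ Fintype.piFinset (fun _ : ↥p.toFinset => Finset.Icc 1 (n + 1)),
            ∏ v : ↥p.toFinset, qq (p.count ↑v) ^ ℓ v) * (A p n : ℚ) := by
          rw [← Finset.sum_mul, ← Finset.mul_sum]
      _ = (5 / 2) * (∏ v : ↥p.toFinset, ∑ i ∈ Finset.Icc 1 (n + 1), qq (p.count ↑v) ^ i)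
            * (A p n : ℚ) := by
          rw [Finset.prod_univ_sum]
      _ ≤ (5 / 2) * (∏ v : ↥p.toFinset, (qq (p.count ↑v) / (1 - qq (p.count ↑v))))
            * (A p n : ℚ) := by
          apply mul_le_mul_of_nonneg_right _ (by positivity)
          apply mul_le_mul_of_nonneg_left _ (by norm_num)
          apply Finset.prod_le_prod
          · intro v _
            exact Finset.sum_nonneg (fun i _ => pow_nonneg (qq_nonneg _) _)
          · intro v _
            exact geom_le _ (qq_nonneg _) (qq_lt_one _ (hc2 v)) _
  -- bound the product
  have hprod : (∏ v : ↥p.toFinset, (qq (p.count ↑v) / (1 - qq (p.count ↑v))))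
      ≤ (24 / 101) * (12 / 13) ^ 4 := by
    rw [← Finset.mul_prod_erase Finset.univ _ (Finset.mem_univ v0)]
    have hcard4 : (Finset.univ.erase v0).card = 4 := by
      rw [Finset.card_erase_of_mem (Finset.mem_univ v0), Finset.card_univ, hcard]
    apply mul_le_mul (g_le_three _ hv0)
    · calc ∏ v ∈ Finset.univ.erase v0, (qq (p.count ↑v) / (1 - qq (p.count ↑v)))
          ≤ ∏ _v ∈ Finset.univ.erase v0, (12 / 13 : ℚ) := by
            apply Finset.prod_le_prod
            · intro v _; exact g_nonneg _ (hc2 v)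
            · intro v _; exact g_le_two _ (hc2 v)
        _ = (12 / 13) ^ 4 := by rw [Finset.prod_const, hcard4]
    · exact Finset.prod_nonneg (fun v _ => g_nonneg _ (hc2 v))
    · norm_num
  -- conclude
  have hfin : ((∑ ℓ ∈ idx p (n + 1), A p ((n + 1) - mOf p ℓ) * 3 ^ (sOf p ℓ) : ℕ) : ℚ)
      ≤ (1 / 2) * A p n := by
    calc ((∑ ℓ ∈ idx p (n + 1), A p ((n + 1) - mOf p ℓ) * 3 ^ (sOf p ℓ) : ℕ) : ℚ)
        ≤ (5 / 2) * (∏ v : ↥p.toFinset, (qq (p.count ↑v) / (1 - qq (p.count ↑v)))) * A p n :=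
          hsum
      _ ≤ (5 / 2) * ((24 / 101) * (12 / 13) ^ 4) * A p n := by
          apply mul_le_mul_of_nonneg_right _ (by positivity)
          apply mul_le_mul_of_nonneg_left hprod (by norm_num)
      _ ≤ (1 / 2) * A p n := by
          apply mul_le_mul_of_nonneg_right _ (by positivity)
          norm_num
  have hQ : ((2 * ((allW (n + 1)).filter
        (fun w => ¬ Occurs p w.dropLast ∧ Occurs p w)).card : ℕ) : ℚ) ≤ (A p n : ℚ) := by
    push_cast
    have h1 : (((allW (n + 1)).filter
        (fun w => ¬ Occurs p w.dropLast ∧ Occurs p w)).card : ℚ)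
        ≤ ((∑ ℓ ∈ idx p (n + 1), A p ((n + 1) - mOf p ℓ) * 3 ^ (sOf p ℓ) : ℕ) : ℚ) := by
      exact_mod_cast hBle
    have := le_trans h1 hfin
    linarith
  exact_mod_cast hQ

end DPaux

namespace DPaux

attribute [local instance] Classical.propDecidable

variable {V : Type*} [DecidableEq V] (p : List V)

lemma all_steps (hd : Doubled p) (hv : p.toFinset.card = 5) (hlen : 11 ≤ p.length) :
    ∀ n, 5 * A p n ≤ 2 * A p (n + 1) := by
  intro n
  induction n using Nat.strong_induction_on with
  | _ n ih => exact step_main p hd hv hlen n ih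

lemma not_occurs_nil (hp : 1 ≤ p.length) : ¬ Occurs p ([] : List (Fin 3)) := by
  rintro ⟨h, hne, hinf⟩
  have h1 : p.flatMap h = [] := List.eq_nil_of_infix_nil hinf
  obtain ⟨v, hv⟩ := List.exists_mem_of_ne_nil p (by
    intro he; rw [he] at hp; simp at hp)
  exact hne v (List.flatMap_eq_nil_iff.mp h1 v hv)

lemma A_pos (hd : Doubled p) (hv : p.toFinset.card = 5) (hlen : 11 ≤ p.length) :
    ∀ n, 1 ≤ A p n := by
  intro n
  induction n with
  | zero =>
    apply Finset.card_pos.mpr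
    exact ⟨[], (mem_Av p).mpr ⟨rfl, not_occurs_nil p (by omega)⟩⟩
  | succ n ih =>
    have := all_steps p hd hv hlen n
    omega

lemma exists_avoiding (hd : Doubled p) (hv : p.toFinset.card = 5) (hlen : 11 ≤ p.length) :
    ∀ n, ∃ z : List (Fin 3), ¬ Occurs p z ∧ z.length = n := by
  intro n
  have := A_pos p hd hv hlen n
  obtain ⟨w, hw⟩ := Finset.card_pos.mp this
  obtain ⟨h1, h2⟩ := (mem_Av p).mp hw
  exact ⟨w, h2, h1⟩

/-- extendability to arbitrarily long avoiding words -/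
def Ext (w : List (Fin 3)) : Prop :=
  ∀ N, ∃ z, ¬ Occurs p z ∧ w <+: z ∧ N ≤ z.length

lemma ext_nil (hA : ∀ n, ∃ z : List (Fin 3), ¬ Occurs p z ∧ z.length = n) : Ext p [] := by
  intro N
  obtain ⟨z, h1, h2⟩ := hA N
  exact ⟨z, h1, List.nil_prefix, by omega⟩

lemma ext_step {w : List (Fin 3)} (hw : Ext p w) : ∃ a : Fin 3, Ext p (w ++ [a]) := by
  by_contra hco
  push_neg at hco
  simp only [Ext, not_forall] at hco
  choose Na hNa using hco
  obtain ⟨z, hz1, hz2, hz3⟩ := hw ((∑ b : Fin 3, Na b) + w.length + 1)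
  obtain ⟨t, rfl⟩ := hz2
  have ht : t ≠ [] := by
    intro he
    rw [he] at hz3
    simp only [List.append_nil] at hz3
    omega
  obtain ⟨a, t', rfl⟩ := List.exists_cons_of_ne_nil ht
  have hpre : w ++ [a] <+: w ++ a :: t' := ⟨t', by simp⟩
  apply hNa a
  refine ⟨w ++ a :: t', hz1, hpre, ?_⟩
  have hNle : Na a ≤ ∑ b : Fin 3, Na b :=
    Finset.single_le_sum (fun _ _ => Nat.zero_le _) (Finset.mem_univ a)
  omega

noncomputable def seqW (hA : ∀ n, ∃ z : List (Fin 3), ¬ Occurs p z ∧ z.length = n) :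
    ℕ → {w : List (Fin 3) // Ext p w}
  | 0 => ⟨[], ext_nil p hA⟩
  | n + 1 =>
    ⟨(seqW hA n).1 ++ [(ext_step p (seqW hA n).2).choose],
      (ext_step p (seqW hA n).2).choose_spec⟩

noncomputable def limF (hA : ∀ n, ∃ z : List (Fin 3), ¬ Occurs p z ∧ z.length = n)
    (n : ℕ) : Fin 3 :=
  (ext_step p (seqW p hA n).2).choose

lemma ofFn_limF (hA : ∀ n, ∃ z : List (Fin 3), ¬ Occurs p z ∧ z.length = n) :
    ∀ n, List.ofFn (fun i : Fin n => limF p hA i) = (seqW p hA n).1 := by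
  intro n
  induction n with
  | zero => simp [seqW]
  | succ n ih =>
    rw [List.ofFn_succ']
    simp only [Fin.coe_castSucc, Fin.val_last, List.concat_eq_append]
    rw [ih]
    rfl

lemma not_occurs_seqW (hA : ∀ n, ∃ z : List (Fin 3), ¬ Occurs p z ∧ z.length = n)
    (n : ℕ) : ¬ Occurs p (seqW p hA n).1 := by
  obtain ⟨z, hz1, hz2, -⟩ := (seqW p hA n).2 0
  intro hocc
  exact hz1 (occurs_of_infix p hocc hz2.isInfix)

end DPaux


/-- Every doubled pattern with exactly 5 distinct variables and length at least 11
is 3-avoidable. -/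
theorem doubled_five_vars_length_ge_eleven {V : Type*} [DecidableEq V]
    (p : List V) (hd : Doubled p) (hv : p.toFinset.card = 5) (hlen : 11 ≤ p.length) :
    IsKAvoidable 3 p := by
  classical
  have hA := DPaux.exists_avoiding p hd hv hlen
  refine ⟨DPaux.limF p hA, ?_⟩
  intro n
  rw [DPaux.ofFn_limF p hA n]
  exact DPaux.not_occurs_seqW p hA n
end

section
/- Every doubled pattern with exactly 5 distinct variables and length exactly 10 whose first three letters are three pairwise distinct variables (i.e., whose prefix of length 3 is ABC up to renaming of variables) is 3-avoidable. -/
namespace AvoidAux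
open List Finset

attribute [local instance] Classical.propDecidable

variable {V : Type*}

lemma occurs_mono {α : Type*} {q : List V} {u w : List α} (h : Occurs q u) (huw : u <:+: w) :
    Occurs q w := by
  obtain ⟨f, hf, hinf⟩ := h
  exact ⟨f, hf, hinf.trans huw⟩

lemma not_occurs_of_prefix {α : Type*} {q : List V} {u w : List α} (h : ¬ Occurs q w)
    (hp : u <+: w) : ¬ Occurs q u := fun hu => h (occurs_mono hu hp.isInfix)

/-- all ternary words of length `n` -/
def allW : ℕ → Finset (List (Fin 3))
  | 0 => {[]}
  | n+1 => (Finset.univ ×ˢ allW n).image fun cw => cw.1 :: cw.2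

lemma mem_allW : ∀ {n : ℕ} {w : List (Fin 3)}, w ∈ allW n ↔ w.length = n := by
  intro n
  induction n with
  | zero => intro w; simp [allW, List.length_eq_zero_iff]
  | succ n ih =>
    intro w
    cases w with
    | nil => simp [allW]
    | cons c w => simp [allW, ih]

lemma card_allW (n : ℕ) : (allW n).card = 3 ^ n := by
  induction n with
  | zero => simp [allW]
  | succ n ih =>
    rw [allW, Finset.card_image_of_injOn, Finset.card_product]
    · simp [ih]; ring
    · rintro ⟨a, u⟩ _ ⟨b, v⟩ _ e
      simp only [List.cons.injEq] at e
      simp [e.1, e.2]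

/-- ternary words of length `n` avoiding `q` -/
noncomputable def Av (q : List V) (n : ℕ) : Finset (List (Fin 3)) :=
  (allW n).filter fun w => ¬ Occurs q w

lemma mem_Av {q : List V} {n : ℕ} {w : List (Fin 3)} :
    w ∈ Av q n ↔ w.length = n ∧ ¬ Occurs q w := by
  simp [Av, mem_allW]

noncomputable def aq (q : List V) (n : ℕ) : ℚ := ((Av q n).card : ℚ)

lemma aq_nonneg (q : List V) (n : ℕ) : 0 ≤ aq q n := by
  simp [aq]

lemma flatMap_congr {α : Type*} {t : List V} {f g : V → List α}
    (h : ∀ v ∈ t, f v = g v) : t.flatMap f = t.flatMap g := by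
  induction t with
  | nil => rfl
  | cons x t ih =>
    simp only [List.flatMap_cons]
    rw [h x (by simp), ih fun v hv => h v (by simp [hv])]

lemma geom_le {x : ℚ} (h0 : 0 ≤ x) (h1 : x < 1) (N : ℕ) :
    ∑ j ∈ Finset.range N, x ^ j ≤ 1 / (1 - x) := by
  have hx : x ≠ 1 := ne_of_lt h1
  have h2 : 0 < 1 - x := by linarith
  have hpow : 0 ≤ x ^ N := pow_nonneg h0 N
  calc ∑ j ∈ Finset.range N, x ^ j = (x ^ N - 1) / (x - 1) := geom_sum_eq hx N
    _ = (1 - x ^ N) / (1 - x) := by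
        rw [div_eq_div_iff (by linarith) (by linarith)]; ring
    _ ≤ 1 / (1 - x) := by gcongr; linarith

lemma range_succ_eq_insert_Icc (N : ℕ) :
    Finset.range (N + 1) = insert 0 (Finset.Icc 1 N) := by
  ext j; simp [Finset.mem_Icc, Finset.mem_range]; omega

lemma geomIcc {x : ℚ} (h0 : 0 ≤ x) (h1 : x < 1) (N : ℕ) :
    ∑ j ∈ Finset.Icc 1 N, x ^ j ≤ x / (1 - x) := by
  have h2 : 0 < 1 - x := by linarith
  have hi : (0 : ℕ) ∉ Finset.Icc 1 N := by simp
  have he : (1 : ℚ) + ∑ j ∈ Finset.Icc 1 N, x ^ j = ∑ j ∈ Finset.range (N + 1), x ^ j := by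
    rw [range_succ_eq_insert_Icc, Finset.sum_insert hi]; simp
  have hb := geom_le h0 h1 (N + 1)
  have hx : x / (1 - x) = 1 / (1 - x) - 1 := by field_simp; ring
  rw [hx]; linarith

lemma geomIcc' {x : ℚ} (h0 : 0 ≤ x) (h1 : x < 1) (N : ℕ) :
    ∑ j ∈ Finset.Icc 1 N, x ^ (j - 1) ≤ 1 / (1 - x) := by
  have hi : (0 : ℕ) ∉ Finset.Icc 1 N := by simp
  have he : (1 : ℚ) + ∑ j ∈ Finset.Icc 1 N, x ^ (j - 1)
      = ∑ j ∈ Finset.range (N + 1), x ^ (j - 1) := by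
    rw [range_succ_eq_insert_Icc, Finset.sum_insert hi]; simp
  have he2 : ∑ j ∈ Finset.range (N + 1), x ^ (j - 1)
      = (∑ j ∈ Finset.range N, x ^ j) + 1 := by
    rw [Finset.sum_range_succ']
    simp
  have hb := geom_le h0 h1 N
  linarith

lemma exists_infinite (q : List V)
    (hne : ∀ n : ℕ, ∃ w : List (Fin 3), w.length = n ∧ ¬ Occurs q w) :
    ∃ f : ℕ → Fin 3, ∀ n : ℕ, ¬ Occurs q (List.ofFn fun i : Fin n => f i) := by
  set Good : List (Fin 3) → Prop :=
    fun u => ∀ m : ℕ, ∃ w, w.length = u.length + m ∧ ¬ Occurs q w ∧ u <+: w with hGood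
  have hGnil : Good [] := by
    intro m
    obtain ⟨w, h1, h2⟩ := hne m
    exact ⟨w, by simpa using h1, h2, List.nil_prefix⟩
  have hstep : ∀ u, Good u → ∃ c, Good (u ++ [c]) := by
    intro u hu
    by_contra hno
    push_neg at hno
    have hno' : ∀ c : Fin 3, ∃ m : ℕ, ∀ w, ¬ (w.length = (u ++ [c]).length + m ∧
        ¬ Occurs q w ∧ (u ++ [c]) <+: w) := by
      intro c
      have hc := hno c
      simp only [hGood] at hc
      push_neg at hc
      obtain ⟨m, hm⟩ := hc
      exact ⟨m, fun w hw => hm w hw.1 hw.2.1 hw.2.2⟩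
    choose mc hmc using hno'
    set M := mc 0 + mc 1 + mc 2 + 1 with hM
    obtain ⟨w, hwlen, hwav, hwpre⟩ := hu M
    obtain ⟨r, rfl⟩ := hwpre
    have hrlen : r.length = M := by
      have := hwlen; simp at this; omega
    have hr : r ≠ [] := by
      intro h; rw [h] at hrlen; simp at hrlen
    obtain ⟨c, r', rfl⟩ := List.exists_cons_of_ne_nil hr
    have hmcle : mc c ≤ mc 0 + mc 1 + mc 2 := by
      have h0 : mc c ≤ ∑ i : Fin 3, mc i := by
        simpa using Finset.single_le_sum (f := fun i => mc i) (fun i _ => Nat.zero_le _)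
          (Finset.mem_univ c)
      have h1 : ∑ i : Fin 3, mc i = mc 0 + mc 1 + mc 2 := by
        rw [Fin.sum_univ_three]
      omega
    set w' := (u ++ c :: r').take (u.length + 1 + mc c) with hw'
    have hrlen' : r'.length + 1 = M := by simpa using hrlen
    have hle : u.length + 1 + mc c ≤ (u ++ c :: r').length := by simp; omega
    apply hmc c w'
    refine ⟨?_, ?_, ?_⟩
    · rw [hw', List.length_take]; simp at hle ⊢; omega
    · exact not_occurs_of_prefix hwav (List.take_prefix _ _)
    · have h1 : u ++ [c] <+: u ++ c :: r' := ⟨r', by simp⟩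
      have h2 : (u ++ [c]).length ≤ u.length + 1 + mc c := by simp
      exact List.prefix_take_iff.mpr ⟨h1, h2⟩
  choose next hnext using hstep
  obtain ⟨U, hU0, hUsucc⟩ : ∃ U : ℕ → {u : List (Fin 3) // Good u},
      (U 0).1 = [] ∧ ∀ n, (U (n + 1)).1 = (U n).1 ++ [next (U n).1 (U n).2] :=
    ⟨fun n => Nat.rec ⟨[], hGnil⟩ (fun _ p => ⟨p.1 ++ [next p.1 p.2], hnext p.1 p.2⟩) n,
      rfl, fun _ => rfl⟩
  have hUlen : ∀ n, (U n).1.length = n := by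
    intro n
    induction n with
    | zero => rw [hU0]; rfl
    | succ n ih => rw [hUsucc, List.length_append, ih]; simp
  refine ⟨fun n => next (U n).1 (U n).2, fun n => ?_⟩
  have hofFn : (List.ofFn fun i : Fin n => next (U i.1).1 (U i.1).2) = (U n).1 := by
    induction n with
    | zero => rw [hU0]; rfl
    | succ n ih =>
      rw [List.ofFn_succ']
      simp only [Fin.coe_castSucc, Fin.val_last]
      rw [List.concat_eq_append, hUsucc, ih]
  rw [hofFn]
  obtain ⟨w, hl, hav, hp⟩ := (U n).2 0
  have : (U n).1 = w := hp.eq_of_length (by omega)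
  rw [this]; exact hav

/-- total length of the 7 trailing blocks -/
def Gfun : ℕ × ℕ × ℕ × ℕ × ℕ → ℕ := fun l => l.1 + l.2.1 + l.2.2.1 + 2 * l.2.2.2.1 + 2 * l.2.2.2.2

/-- reconstruction of the substitution from the avoiding prefix and the D,E contents -/
def hrec [DecidableEq V] (a b c d e : V) (la lb : ℕ) (suf cd ce : List (Fin 3)) :
    V → List (Fin 3) :=
  fun v => if v = d then cd else if v = e then ce else
    if v = a then suf.take la else if v = b then (suf.drop la).take lb else (suf.drop la).drop lb

/-- reconstruction of a bad word -/
def psi [DecidableEq V] (a b c d e : V) (t : List V) (la lb lc : ℕ)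
    (x : List (Fin 3) × List (Fin 3) × List (Fin 3)) : List (Fin 3) :=
  x.1 ++ t.flatMap (hrec a b c d e la lb (x.1.drop (x.1.length - (la + lb + lc))) x.2.1 x.2.2)

lemma step [DecidableEq V] (a b c d e : V) (t : List V)
    (hab : a ≠ b) (hac : a ≠ c) (hbc : b ≠ c)
    (hda : d ≠ a) (hdb : d ≠ b) (hdc : d ≠ c)
    (hea : e ≠ a) (heb : e ≠ b) (hec : e ≠ c) (hde : d ≠ e)
    (hperm : t.Perm [a, b, c, d, d, e, e]) :
    ∀ n : ℕ, 14 * aq (a :: b :: c :: t) n ≤ 5 * aq (a :: b :: c :: t) (n + 1) := by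
  intro n
  induction n using Nat.strong_induction_on with
  | _ n IH =>
  set q : List V := a :: b :: c :: t with hq
  have decay : ∀ k m : ℕ, m + k = n → aq q m ≤ (5 / 14 : ℚ) ^ k * aq q n := by
    intro k
    induction k with
    | zero => intro m hm; simp [show m = n by omega]
    | succ k ihk =>
      intro m hm
      have h1 : 14 * aq q m ≤ 5 * aq q (m + 1) := IH m (by omega)
      have h2 : aq q (m + 1) ≤ (5 / 14 : ℚ) ^ k * aq q n := ihk (m + 1) (by omega)
      calc aq q m ≤ (5 / 14 : ℚ) * aq q (m + 1) := by linarith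
        _ ≤ (5 / 14 : ℚ) * ((5 / 14 : ℚ) ^ k * aq q n) := by
            apply mul_le_mul_of_nonneg_left h2 (by norm_num)
        _ = (5 / 14 : ℚ) ^ (k + 1) * aq q n := by ring
  set X : Finset (List (Fin 3)) :=
    ((Av q n) ×ˢ (Finset.univ : Finset (Fin 3))).image (fun wc => wc.1 ++ [wc.2]) with hX
  have hXcard : (X.card : ℚ) = 3 * aq q n := by
    rw [hX, Finset.card_image_of_injOn, Finset.card_product]
    · simp [aq]; ring
    · rintro ⟨w, cc⟩ hw ⟨w', cc'⟩ hw' hE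
      simp only [Finset.mem_coe, Finset.mem_product, mem_Av] at hw hw'
      simp only at hE
      obtain ⟨h1, h2⟩ := List.append_inj hE (by rw [hw.1.1, hw'.1.1])
      simp only [List.cons.injEq] at h2
      simp [h1, h2.1]
  set Bad := X.filter (fun w => Occurs q w) with hBad
  have hsplit : X ⊆ Av q (n + 1) ∪ Bad := by
    intro w hw
    by_cases ho : Occurs q w
    · exact Finset.mem_union_right _ (Finset.mem_filter.mpr ⟨hw, ho⟩)
    · apply Finset.mem_union_left
      rw [mem_Av]
      refine ⟨?_, ho⟩
      rw [hX, Finset.mem_image] at hw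
      obtain ⟨⟨w0, ch⟩, hw0, rfl⟩ := hw
      rw [Finset.mem_product] at hw0
      have := (mem_Av.mp hw0.1).1
      simp [this]
  have hcard1 : (X.card : ℚ) ≤ aq q (n + 1) + (Bad.card : ℚ) := by
    have h1 := (Finset.card_le_card hsplit).trans (Finset.card_union_le (Av q (n + 1)) Bad)
    have h2 : (X.card : ℚ) ≤ (((Av q (n + 1)).card + Bad.card : ℕ) : ℚ) := by exact_mod_cast h1
    rw [Nat.cast_add] at h2
    exact h2
  set I : Finset ℕ := Finset.Icc 1 (n + 1) with hI
  set Tup := ((I ×ˢ I ×ˢ I ×ˢ I ×ˢ I).filter fun l => Gfun l ≤ n + 1) with hTup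
  have hBadsub : Bad ⊆ Tup.biUnion (fun l =>
      ((Av q (n + 1 - Gfun l) ×ˢ allW l.2.2.2.1 ×ˢ allW l.2.2.2.2).image
        (psi a b c d e t l.1 l.2.1 l.2.2.1))) := by
    intro B hB
    rw [hBad, Finset.mem_filter] at hB
    obtain ⟨hBX, hBocc⟩ := hB
    rw [hX, Finset.mem_image] at hBX
    obtain ⟨⟨w0, ch⟩, hw0, hBeq⟩ := hBX
    rw [Finset.mem_product] at hw0
    obtain ⟨hw0len, hw0av⟩ := mem_Av.mp hw0.1
    simp only at hBeq
    obtain ⟨h, hne, hinf⟩ := hBocc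
    obtain ⟨x, y, hxy⟩ := hinf
    have hy : y = [] := by
      rcases List.eq_nil_or_concat y with rfl | ⟨y0, yl, rfl⟩
      · rfl
      exfalso
      have heq2 : (x ++ q.flatMap h ++ y0) ++ [yl] = w0 ++ [ch] := by
        calc (x ++ q.flatMap h ++ y0) ++ [yl] = x ++ q.flatMap h ++ y0.concat yl := by
              simp [List.append_assoc]
          _ = w0 ++ [ch] := by rw [hxy, ← hBeq]
      obtain ⟨hpre, -⟩ := List.append_inj' heq2 rfl
      exact hw0av ⟨h, hne, x, y0, hpre⟩
    rw [hy] at hxy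
    have hxF : x ++ q.flatMap h = B := by simpa using hxy
    have hqflat : q.flatMap h = h a ++ (h b ++ (h c ++ t.flatMap h)) := by
      rw [hq]; simp [List.flatMap_cons]
    set la := (h a).length with hlad
    set lb := (h b).length with hlbd
    set lc := (h c).length with hlcd
    set ld := (h d).length with hldd
    set le := (h e).length with hled
    have hla1 : 1 ≤ la := List.length_pos_iff.mpr (hne a)
    have hlb1 : 1 ≤ lb := List.length_pos_iff.mpr (hne b)
    have hlc1 : 1 ≤ lc := List.length_pos_iff.mpr (hne c)
    have hld1 : 1 ≤ ld := List.length_pos_iff.mpr (hne d)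
    have hle1 : 1 ≤ le := List.length_pos_iff.mpr (hne e)
    have htlen : (t.flatMap h).length = la + lb + lc + 2 * ld + 2 * le := by
      rw [List.length_flatMap]
      have h1 : (t.map (fun a => (h a).length)).sum = ([a, b, c, d, d, e, e].map (fun a => (h a).length)).sum :=
        (hperm.map _).sum_eq
      rw [h1]
      simp [Function.comp]
      omega
    set W' := x ++ h a ++ h b ++ h c with hW'
    have hBW : B = W' ++ t.flatMap h := by
      rw [← hxF, hqflat, hW']; simp [List.append_assoc]
    have hBlen : B.length = n + 1 := by rw [← hBeq]; simp [hw0len]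
    have hW'lenG : W'.length + (la + lb + lc + 2 * ld + 2 * le) = n + 1 := by
      rw [hBW, List.length_append, htlen] at hBlen; omega
    have hGle : la + lb + lc + 2 * ld + 2 * le ≤ n + 1 := by omega
    have hW'len : W'.length = n + 1 - (la + lb + lc + 2 * ld + 2 * le) := by omega
    have hW'pre : W' <+: B := ⟨t.flatMap h, hBW.symm⟩
    have hW'prew0 : W' <+: w0 := by
      have e1 : W' = B.take W'.length := List.prefix_iff_eq_take.mp hW'pre
      have e2 : w0 = B.take n := by
        rw [← hBeq, List.take_left' hw0len]
      have hlen' : W'.length ≤ n := by omega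
      have e3 : B.take W'.length = (B.take n).take W'.length := by
        rw [List.take_take, min_eq_left hlen']
      rw [e1, e3, ← e2]
      exact List.take_prefix _ _
    have hW'av : ¬ Occurs q W' := not_occurs_of_prefix hw0av hW'prew0
    rw [Finset.mem_biUnion]
    refine ⟨(la, lb, lc, ld, le), ?_, ?_⟩
    · rw [hTup, Finset.mem_filter]
      constructor
      · simp only [Finset.mem_product, hI, Finset.mem_Icc]
        exact ⟨⟨hla1, by omega⟩, ⟨hlb1, by omega⟩, ⟨hlc1, by omega⟩, ⟨hld1, by omega⟩,
          ⟨hle1, by omega⟩⟩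
      · show Gfun (la, lb, lc, ld, le) ≤ n + 1
        simpa [Gfun] using hGle
    · rw [Finset.mem_image]
      refine ⟨(W', h d, h e), ?_, ?_⟩
      · simp only [Finset.mem_product]
        refine ⟨mem_Av.mpr ⟨?_, hW'av⟩, mem_allW.mpr rfl, mem_allW.mpr rfl⟩
        simpa [Gfun] using hW'len
      · show W' ++ t.flatMap
            (hrec a b c d e la lb (W'.drop (W'.length - (la + lb + lc))) (h d) (h e)) = B
        rw [hBW]
        congr 1
        have hsuf : W'.drop (W'.length - (la + lb + lc)) = h a ++ (h b ++ h c) := by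
          have hidx : W'.length - (la + lb + lc) = x.length := by
            rw [hW']; simp [List.length_append]; omega
          have hW2 : W' = x ++ (h a ++ (h b ++ h c)) := by rw [hW']; simp [List.append_assoc]
          rw [hidx]
          conv_lhs => rw [hW2]
          rw [List.drop_left]
        rw [hsuf]
        apply flatMap_congr
        intro v hv
        have hv5 : v = a ∨ v = b ∨ v = c ∨ v = d ∨ v = e := by
          have := hperm.subset hv; simp at this; tauto
        unfold hrec
        rcases hv5 with rfl | rfl | rfl | rfl | rfl
        · rw [if_neg (Ne.symm hda), if_neg (Ne.symm hea), if_pos rfl,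
            List.take_left' hlad.symm]
        · rw [if_neg (Ne.symm hdb), if_neg (Ne.symm heb), if_neg (Ne.symm hab),
            if_pos rfl, List.drop_left' hlad.symm, List.take_left' hlbd.symm]
        · rw [if_neg (Ne.symm hdc), if_neg (Ne.symm hec), if_neg (Ne.symm hac),
            if_neg (Ne.symm hbc), List.drop_left' hlad.symm, List.drop_left' hlbd.symm]
        · rw [if_pos rfl]
        · rw [if_neg (Ne.symm hde), if_pos rfl]
  have hBadcardN : Bad.card ≤
      ∑ l ∈ Tup, (Av q (n + 1 - Gfun l)).card * (3 ^ l.2.2.2.1 * 3 ^ l.2.2.2.2) := by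
    refine (Finset.card_le_card hBadsub).trans ?_
    refine (Finset.card_biUnion_le).trans ?_
    apply Finset.sum_le_sum
    intro l _
    refine (Finset.card_image_le).trans ?_
    rw [Finset.card_product, Finset.card_product, card_allW, card_allW]
  have hBadcard : (Bad.card : ℚ) ≤
      ∑ l ∈ Tup, aq q (n + 1 - Gfun l) * ((3 : ℚ) ^ l.2.2.2.1 * 3 ^ l.2.2.2.2) := by
    have h2 : ((Bad.card : ℕ) : ℚ) ≤
        ((∑ l ∈ Tup, (Av q (n + 1 - Gfun l)).card * (3 ^ l.2.2.2.1 * 3 ^ l.2.2.2.2) : ℕ) : ℚ) := by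
      exact_mod_cast hBadcardN
    refine h2.trans (le_of_eq ?_)
    push_cast [aq]
    rfl
  set F : ℕ × ℕ × ℕ × ℕ × ℕ → ℚ := fun l => (5 / 14 : ℚ) ^ (l.1 - 1) *
      ((5 / 14 : ℚ) ^ l.2.1 * ((5 / 14 : ℚ) ^ l.2.2.1 *
      ((75 / 196 : ℚ) ^ l.2.2.2.1 * (75 / 196 : ℚ) ^ l.2.2.2.2))) with hF
  have hFnn : ∀ l, 0 ≤ F l := by
    intro l; rw [hF]; positivity
  have hterm : ∀ l ∈ Tup, aq q (n + 1 - Gfun l) * ((3 : ℚ) ^ l.2.2.2.1 * 3 ^ l.2.2.2.2)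
      ≤ aq q n * F l := by
    intro l hl
    obtain ⟨la, lb, lc, ld, le⟩ := l
    rw [hTup, Finset.mem_filter] at hl
    obtain ⟨hmem, hG⟩ := hl
    simp only [Finset.mem_product, hI, Finset.mem_Icc] at hmem
    simp only [Gfun] at hG
    have hdec := decay (la + lb + lc + 2 * ld + 2 * le - 1)
      (n + 1 - (la + lb + lc + 2 * ld + 2 * le)) (by omega)
    have hnn : (0 : ℚ) ≤ (3 : ℚ) ^ ld * 3 ^ le := by positivity
    have hGfun : Gfun (la, lb, lc, ld, le) = la + lb + lc + 2 * ld + 2 * le := rfl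
    rw [hGfun]
    have step1 : aq q (n + 1 - (la + lb + lc + 2 * ld + 2 * le)) * ((3 : ℚ) ^ ld * 3 ^ le)
        ≤ ((5 / 14 : ℚ) ^ (la + lb + lc + 2 * ld + 2 * le - 1) * aq q n) * ((3 : ℚ) ^ ld * 3 ^ le) :=
      mul_le_mul_of_nonneg_right hdec hnn
    refine step1.trans (le_of_eq ?_)
    have e1 : (5 / 14 : ℚ) ^ (la + lb + lc + 2 * ld + 2 * le - 1)
        = (5 / 14 : ℚ) ^ (la - 1) * ((5 / 14 : ℚ) ^ lb * ((5 / 14 : ℚ) ^ lc *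
          ((5 / 14 : ℚ) ^ (2 * ld) * (5 / 14 : ℚ) ^ (2 * le)))) := by
      rw [← pow_add, ← pow_add, ← pow_add, ← pow_add]
      congr 1
      omega
    have e3 : (5 / 14 : ℚ) ^ (2 * ld) * 3 ^ ld = (75 / 196 : ℚ) ^ ld := by
      rw [pow_mul, ← mul_pow]; norm_num
    have e4 : (5 / 14 : ℚ) ^ (2 * le) * 3 ^ le = (75 / 196 : ℚ) ^ le := by
      rw [pow_mul, ← mul_pow]; norm_num
    rw [hF]
    simp only
    rw [e1, ← e3, ← e4]
    ring
  have hsum1 : ∑ l ∈ Tup, aq q (n + 1 - Gfun l) * ((3 : ℚ) ^ l.2.2.2.1 * 3 ^ l.2.2.2.2)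
      ≤ aq q n * ∑ l ∈ Tup, F l := by
    rw [Finset.mul_sum]
    exact Finset.sum_le_sum hterm
  have hsum2 : ∑ l ∈ Tup, F l ≤ ∑ l ∈ I ×ˢ I ×ˢ I ×ˢ I ×ˢ I, F l := by
    apply Finset.sum_le_sum_of_subset_of_nonneg
    · rw [hTup]; exact Finset.filter_subset _ _
    · intro l _ _; exact hFnn l
  have hfact : ∑ l ∈ I ×ˢ I ×ˢ I ×ˢ I ×ˢ I, F l
      = (∑ j ∈ I, (5 / 14 : ℚ) ^ (j - 1)) * ((∑ j ∈ I, (5 / 14 : ℚ) ^ j) *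
        ((∑ j ∈ I, (5 / 14 : ℚ) ^ j) * ((∑ j ∈ I, (75 / 196 : ℚ) ^ j) *
        (∑ j ∈ I, (75 / 196 : ℚ) ^ j)))) := by
    rw [hF]
    simp only [Finset.sum_product]
    simp only [← Finset.mul_sum, ← Finset.sum_mul]
  have hx1 : (0 : ℚ) ≤ 5 / 14 := by norm_num
  have hx2 : (5 / 14 : ℚ) < 1 := by norm_num
  have hx3 : (0 : ℚ) ≤ 75 / 196 := by norm_num
  have hx4 : (75 / 196 : ℚ) < 1 := by norm_num
  have hS1 : ∑ j ∈ I, (5 / 14 : ℚ) ^ (j - 1) ≤ 14 / 9 := by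
    refine (geomIcc' hx1 hx2 (n + 1)).trans ?_
    norm_num
  have hS2 : ∑ j ∈ I, (5 / 14 : ℚ) ^ j ≤ 5 / 9 := by
    refine (geomIcc hx1 hx2 (n + 1)).trans ?_
    norm_num
  have hS3 : ∑ j ∈ I, (75 / 196 : ℚ) ^ j ≤ 75 / 121 := by
    refine (geomIcc hx3 hx4 (n + 1)).trans ?_
    norm_num
  have hN1 : (0 : ℚ) ≤ ∑ j ∈ I, (5 / 14 : ℚ) ^ (j - 1) :=
    Finset.sum_nonneg fun j _ => by positivity
  have hN2 : (0 : ℚ) ≤ ∑ j ∈ I, (5 / 14 : ℚ) ^ j :=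
    Finset.sum_nonneg fun j _ => by positivity
  have hN3 : (0 : ℚ) ≤ ∑ j ∈ I, (75 / 196 : ℚ) ^ j :=
    Finset.sum_nonneg fun j _ => by positivity
  have hprod : (∑ j ∈ I, (5 / 14 : ℚ) ^ (j - 1)) * ((∑ j ∈ I, (5 / 14 : ℚ) ^ j) *
        ((∑ j ∈ I, (5 / 14 : ℚ) ^ j) * ((∑ j ∈ I, (75 / 196 : ℚ) ^ j) *
        (∑ j ∈ I, (75 / 196 : ℚ) ^ j)))) ≤ (14 / 9 : ℚ) * ((5 / 9) * ((5 / 9) * ((75 / 121) * (75 / 121)))) := by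
    have m1 : (∑ j ∈ I, (75 / 196 : ℚ) ^ j) * (∑ j ∈ I, (75 / 196 : ℚ) ^ j)
        ≤ (75 / 121 : ℚ) * (75 / 121) := mul_le_mul hS3 hS3 hN3 (by norm_num)
    have m2 : (∑ j ∈ I, (5 / 14 : ℚ) ^ j) * ((∑ j ∈ I, (75 / 196 : ℚ) ^ j) *
        (∑ j ∈ I, (75 / 196 : ℚ) ^ j)) ≤ (5 / 9 : ℚ) * ((75 / 121) * (75 / 121)) :=
      mul_le_mul hS2 m1 (mul_nonneg hN3 hN3) (by norm_num)
    have m3 : (∑ j ∈ I, (5 / 14 : ℚ) ^ j) * ((∑ j ∈ I, (5 / 14 : ℚ) ^ j) *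
        ((∑ j ∈ I, (75 / 196 : ℚ) ^ j) * (∑ j ∈ I, (75 / 196 : ℚ) ^ j)))
        ≤ (5 / 9 : ℚ) * ((5 / 9) * ((75 / 121) * (75 / 121))) :=
      mul_le_mul hS2 m2 (mul_nonneg hN2 (mul_nonneg hN3 hN3)) (by norm_num)
    exact mul_le_mul hS1 m3 (mul_nonneg hN2 (mul_nonneg hN2 (mul_nonneg hN3 hN3))) (by norm_num)
  have hnum : (14 / 9 : ℚ) * ((5 / 9) * ((5 / 9) * ((75 / 121) * (75 / 121)))) ≤ 1 / 5 := by
    norm_num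
  have hfinal : (Bad.card : ℚ) ≤ (1 / 5) * aq q n := by
    have hc2 : ∑ l ∈ Tup, F l ≤ 1 / 5 := by
      refine hsum2.trans ?_
      rw [hfact]
      exact hprod.trans hnum
    have hc3 : aq q n * ∑ l ∈ Tup, F l ≤ aq q n * (1 / 5) :=
      mul_le_mul_of_nonneg_left hc2 (aq_nonneg q n)
    calc (Bad.card : ℚ) ≤ ∑ l ∈ Tup, aq q (n + 1 - Gfun l) * ((3 : ℚ) ^ l.2.2.2.1 * 3 ^ l.2.2.2.2) :=
          hBadcard
      _ ≤ aq q n * ∑ l ∈ Tup, F l := hsum1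
      _ ≤ aq q n * (1 / 5) := hc3
      _ = (1 / 5) * aq q n := mul_comm _ _
  linarith [hXcard, hcard1, hfinal, aq_nonneg q n, aq_nonneg q (n + 1)]

lemma key [DecidableEq V] (a b c d e : V) (t : List V)
    (hab : a ≠ b) (hac : a ≠ c) (hbc : b ≠ c)
    (hda : d ≠ a) (hdb : d ≠ b) (hdc : d ≠ c)
    (hea : e ≠ a) (heb : e ≠ b) (hec : e ≠ c) (hde : d ≠ e)
    (hperm : t.Perm [a, b, c, d, d, e, e]) :
    ∃ f : ℕ → Fin 3, ∀ n : ℕ, ¬ Occurs (a :: b :: c :: t) (List.ofFn fun i : Fin n => f i) := by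
  apply exists_infinite
  have hbase : aq (a :: b :: c :: t) 0 = 1 := by
    have hAv : Av (a :: b :: c :: t) 0 = {[]} := by
      apply Finset.eq_singleton_iff_unique_mem.mpr
      constructor
      · rw [mem_Av]
        refine ⟨rfl, ?_⟩
        rintro ⟨h, hne, hinf⟩
        obtain ⟨s, t', hst⟩ := hinf
        have h0 : (a :: b :: c :: t).flatMap h = [] := by
          rcases List.append_eq_nil_iff.mp hst with ⟨h1, -⟩
          rcases List.append_eq_nil_iff.mp h1 with ⟨-, h2⟩
          exact h2
        rw [List.flatMap_cons] at h0
        exact hne a (List.append_eq_nil_iff.mp h0).1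
      · intro w hw
        rw [mem_Av] at hw
        exact List.length_eq_zero_iff.mp hw.1
    simp [aq, hAv]
  have hpos : ∀ n, 1 ≤ aq (a :: b :: c :: t) n := by
    intro n
    induction n with
    | zero => rw [hbase]
    | succ n ih =>
      have hs := step a b c d e t hab hac hbc hda hdb hdc hea heb hec hde hperm n
      linarith
  intro n
  have h1 := hpos n
  have h2 : 1 ≤ (Av (a :: b :: c :: t) n).card := by
    by_contra hcon
    have : (Av (a :: b :: c :: t) n).card = 0 := by omega
    rw [aq, this] at h1
    norm_num at h1
  obtain ⟨w, hw⟩ := Finset.card_pos.mp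
    (show 0 < (Av (a :: b :: c :: t) n).card by omega)
  rw [mem_Av] at hw
  exact ⟨w, hw.1, hw.2⟩

end AvoidAux

/-- Every doubled pattern with exactly 5 distinct variables and length exactly 10
whose first three letters are pairwise distinct variables (prefix `ABC` up to
renaming) is 3-avoidable. -/
theorem doubled_five_vars_length_ten_prefix_abc {V : Type*} [DecidableEq V]
    (p : List V) (hd : Doubled p) (hv : p.toFinset.card = 5) (hlen : p.length = 10)
    (hpre : (p.take 3).Nodup) :
    IsKAvoidable 3 p := by
  classical
  obtain ⟨a, b, c, t, rfl⟩ : ∃ a b c t, p = a :: b :: c :: t := by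
    rcases p with _ | ⟨a, p⟩
    · simp at hlen
    rcases p with _ | ⟨b, p⟩
    · simp at hlen
    rcases p with _ | ⟨c, p⟩
    · simp at hlen
    exact ⟨a, b, c, p, rfl⟩
  have htake : (a :: b :: c :: t).take 3 = [a, b, c] := rfl
  rw [htake] at hpre
  have hab : a ≠ b := by
    intro h; subst h; simp at hpre
  have hac : a ≠ c := by
    intro h; subst h; simp at hpre
  have hbc : b ≠ c := by
    intro h; subst h; simp at hpre
  -- every variable occurs exactly twice
  have hcnt : ∀ v ∈ (a :: b :: c :: t), (a :: b :: c :: t).count v = 2 := by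
    intro v hvP
    by_contra hne2
    have h2le : 2 ≤ (a :: b :: c :: t).count v := hd v hvP
    have hsum : ∑ u ∈ (a :: b :: c :: t).toFinset, (a :: b :: c :: t).count u = 10 := by
      rw [List.sum_toFinset_count_eq_length]; exact hlen
    have hlow : ∀ u ∈ (a :: b :: c :: t).toFinset, 2 ≤ (a :: b :: c :: t).count u :=
      fun u hu => hd u (List.mem_toFinset.mp hu)
    have hvmem : v ∈ (a :: b :: c :: t).toFinset := List.mem_toFinset.mpr hvP
    have hgt : ∑ u ∈ (a :: b :: c :: t).toFinset, 2 <
        ∑ u ∈ (a :: b :: c :: t).toFinset, (a :: b :: c :: t).count u :=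
      Finset.sum_lt_sum hlow ⟨v, hvmem, by omega⟩
    rw [Finset.sum_const, hv, hsum] at hgt
    simp at hgt
  -- get the two other variables
  have habc_sub : ({a, b, c} : Finset V) ⊆ (a :: b :: c :: t).toFinset := by
    intro v hv'
    simp only [Finset.mem_insert, Finset.mem_singleton] at hv'
    rw [List.mem_toFinset]
    rcases hv' with rfl | rfl | rfl <;> simp
  have hcard3 : ({a, b, c} : Finset V).card = 3 := by
    rw [Finset.card_insert_of_notMem (by simp [hab, hac]),
      Finset.card_insert_of_notMem (by simp [hbc]), Finset.card_singleton]
  have hsd : ((a :: b :: c :: t).toFinset \ {a, b, c}).card = 2 := by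
    rw [Finset.card_sdiff_of_subset habc_sub, hv, hcard3]
  obtain ⟨d, e, hde, hset⟩ := Finset.card_eq_two.mp hsd
  have hdmem : d ∈ (a :: b :: c :: t).toFinset ∧ d ∉ ({a, b, c} : Finset V) := by
    have : d ∈ (a :: b :: c :: t).toFinset \ {a, b, c} := by rw [hset]; simp
    exact Finset.mem_sdiff.mp this
  have hemem : e ∈ (a :: b :: c :: t).toFinset ∧ e ∉ ({a, b, c} : Finset V) := by
    have : e ∈ (a :: b :: c :: t).toFinset \ {a, b, c} := by rw [hset]; simp
    exact Finset.mem_sdiff.mp this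
  have hda : d ≠ a := by intro h; exact hdmem.2 (by simp [h])
  have hdb : d ≠ b := by intro h; exact hdmem.2 (by simp [h])
  have hdc : d ≠ c := by intro h; exact hdmem.2 (by simp [h])
  have hea : e ≠ a := by intro h; exact hemem.2 (by simp [h])
  have heb : e ≠ b := by intro h; exact hemem.2 (by simp [h])
  have hec : e ≠ c := by intro h; exact hemem.2 (by simp [h])
  have hPf : (a :: b :: c :: t).toFinset = {a, b, c, d, e} := by
    apply Finset.Subset.antisymm
    · intro v hvm
      by_cases h1 : v ∈ ({a, b, c} : Finset V)
      · simp only [Finset.mem_insert, Finset.mem_singleton] at h1 ⊢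
        tauto
      · have hm : v ∈ (a :: b :: c :: t).toFinset \ {a, b, c} := Finset.mem_sdiff.mpr ⟨hvm, h1⟩
        rw [hset] at hm
        simp only [Finset.mem_insert, Finset.mem_singleton] at hm ⊢
        tauto
    · intro v hvm
      simp only [Finset.mem_insert, Finset.mem_singleton] at hvm
      rcases hvm with rfl | rfl | rfl | rfl | rfl
      · exact habc_sub (by simp)
      · exact habc_sub (by simp)
      · exact habc_sub (by simp)
      · exact hdmem.1
      · exact hemem.1
  -- counts inside t
  have hsplit3 : (a :: b :: c :: t) = [a, b, c] ++ t := rfl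
  have hca : List.count a [a, b, c] = 1 := by
    simp [List.count_cons, hab, hac, hab.symm, hac.symm]
  have hcb : List.count b [a, b, c] = 1 := by
    simp [List.count_cons, Ne.symm hab, hbc, hab, hbc.symm]
  have hcc : List.count c [a, b, c] = 1 := by
    simp [List.count_cons, Ne.symm hac, Ne.symm hbc, hac, hbc]
  have hcd : List.count d [a, b, c] = 0 := by
    simp [List.count_cons, Ne.symm hda, Ne.symm hdb, Ne.symm hdc]
  have hce : List.count e [a, b, c] = 0 := by
    simp [List.count_cons, Ne.symm hea, Ne.symm heb, Ne.symm hec]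
  have hta : t.count a = 1 := by
    have h2 := hcnt a (by simp)
    rw [hsplit3, List.count_append, hca] at h2
    omega
  have htb : t.count b = 1 := by
    have h2 := hcnt b (by simp)
    rw [hsplit3, List.count_append, hcb] at h2
    omega
  have htc : t.count c = 1 := by
    have h2 := hcnt c (by simp)
    rw [hsplit3, List.count_append, hcc] at h2
    omega
  have htd : t.count d = 2 := by
    have hdp : d ∈ (a :: b :: c :: t) := List.mem_toFinset.mp hdmem.1
    have h2 := hcnt d hdp
    rw [hsplit3, List.count_append, hcd] at h2
    omega
  have hte : t.count e = 2 := by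
    have hep : e ∈ (a :: b :: c :: t) := List.mem_toFinset.mp hemem.1
    have h2 := hcnt e hep
    rw [hsplit3, List.count_append, hce] at h2
    omega
  have hperm : t.Perm [a, b, c, d, d, e, e] := by
    rw [List.perm_iff_count]
    intro v
    by_cases hva : v = a
    · subst hva
      rw [hta]
      simp [List.count_cons, hab, hac, Ne.symm hda, Ne.symm hea, hab.symm, hac.symm, hda, hea]
    by_cases hvb : v = b
    · subst hvb
      rw [htb]
      simp [List.count_cons, Ne.symm hab, hbc, Ne.symm hdb, Ne.symm heb, hab, hbc.symm, hdb, heb]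
    by_cases hvc : v = c
    · subst hvc
      rw [htc]
      simp [List.count_cons, Ne.symm hac, Ne.symm hbc, Ne.symm hdc, Ne.symm hec, hac, hbc, hdc, hec]
    by_cases hvd : v = d
    · subst hvd
      rw [htd]
      simp [List.count_cons, hda, hdb, hdc, hde, hda.symm, hdb.symm, hdc.symm, hde.symm]
    by_cases hve : v = e
    · subst hve
      rw [hte]
      simp [List.count_cons, hea, heb, hec, Ne.symm hde, hea.symm, heb.symm, hec.symm, hde]
    · have hvm : v ∉ (a :: b :: c :: t) := by
        intro hmem
        have : v ∈ ({a, b, c, d, e} : Finset V) := by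
          rw [← hPf]; exact List.mem_toFinset.mpr hmem
        simp only [Finset.mem_insert, Finset.mem_singleton] at this
        tauto
      have hvt : v ∉ t := fun hmem => hvm (by simp [hmem])
      rw [List.count_eq_zero.mpr hvt]
      have : v ∉ [a, b, c, d, d, e, e] := by
        intro hmem
        simp only [List.mem_cons, List.not_mem_nil, or_false] at hmem
        tauto
      rw [List.count_eq_zero.mpr this]
  exact AvoidAux.key a b c d e t hab hac hbc hda hdb hdc hea heb hec hde hperm
end

section
/- For all integers n ≥ 1 and k ≥ 1, every word of length n^k over a k-letter alphabet contains a nonempty n-splitted factor. -/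
/-- A word `w` is `n`-splitted if `n` divides `|w|` and each of the `n` consecutive
blocks of length `|w|/n` of `w` contains every letter occurring in `w`. -/
def IsNSplitted {α : Type*} (n : ℕ) (w : List α) : Prop :=
  n ∣ w.length ∧
    ∀ i < n, ∀ a ∈ w, a ∈ (w.drop (i * (w.length / n))).take (w.length / n)

lemma aux_nsplitted {α : Type*} [DecidableEq α] (n : ℕ) (hn : 1 ≤ n) :
    ∀ k (w : List α), w.length = n ^ k → w.toFinset.card ≤ k →
      ∃ u, u ≠ [] ∧ u <:+: w ∧ IsNSplitted n u := by
  intro k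
  induction k with
  | zero =>
    intro w hw hc
    exfalso
    have hne : w ≠ [] := by
      intro h; rw [h] at hw; simp at hw
    obtain ⟨a, ha⟩ := List.exists_mem_of_ne_nil w hne
    have : a ∈ w.toFinset := List.mem_toFinset.mpr ha
    have := Finset.card_pos.mpr ⟨a, this⟩
    omega
  | succ k ih =>
    intro w hw hc
    have hdiv : w.length / n = n ^ k := by
      rw [hw, pow_succ, Nat.mul_div_cancel _ hn]
    by_cases hA : ∀ i < n, ∀ a ∈ w, a ∈ (w.drop (i * (w.length / n))).take (w.length / n)
    · refine ⟨w, ?_, List.infix_refl w, ?_, hA⟩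
      · intro h; rw [h] at hw; simp at hw
        have : 1 ≤ n ^ (k+1) := Nat.one_le_pow _ _ hn
        omega
      · rw [hw, pow_succ]; exact dvd_mul_left n (n ^ k)
    · push_neg at hA
      obtain ⟨i, hi, a, haw, hab⟩ := hA
      set b := (w.drop (i * (w.length / n))).take (w.length / n) with hb
      have hlen : b.length = n ^ k := by
        rw [hb, List.length_take, List.length_drop, hdiv, hw, pow_succ]
        have : i * n ^ k + n ^ k ≤ n ^ k * n := by
          have : (i + 1) * n ^ k ≤ n * n ^ k :=
            Nat.mul_le_mul_right _ (by omega)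
          nlinarith
        omega
      have hsub : b.toFinset ⊆ w.toFinset.erase a := by
        intro x hx
        refine Finset.mem_erase.mpr ⟨?_, ?_⟩
        · rintro rfl; exact hab (List.mem_toFinset.mp hx)
        · have : x ∈ b := List.mem_toFinset.mp hx
          have : x ∈ w := by
            have h1 : b <+: w.drop (i * (w.length / n)) := List.take_prefix _ _
            have h2 : w.drop (i * (w.length / n)) <:+ w := List.drop_suffix _ _
            exact h2.subset (h1.subset this)
          exact List.mem_toFinset.mpr this
      have hcard : b.toFinset.card ≤ k := by
        have h1 := Finset.card_le_card hsub
        rw [Finset.card_erase_of_mem (List.mem_toFinset.mpr haw)] at h1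
        omega
      obtain ⟨u, hune, huinf, husp⟩ := ih b hlen hcard
      have hbw : b <:+: w :=
        ((List.take_prefix _ _).isInfix).trans (List.drop_suffix _ _).isInfix
      exact ⟨u, hune, huinf.trans hbw, husp⟩

/-- For all `n ≥ 1` and `k ≥ 1`, every word of length `n ^ k` over a `k`-letter
alphabet contains a nonempty `n`-splitted factor. -/
theorem exists_nsplitted_factor (n k : ℕ) (hn : 1 ≤ n) (hk : 1 ≤ k)
    (w : List (Fin k)) (hw : w.length = n ^ k) :
    ∃ u : List (Fin k), u ≠ [] ∧ u <:+: w ∧ IsNSplitted n u := by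
  apply aux_nsplitted n hn k w hw
  calc w.toFinset.card ≤ (Finset.univ : Finset (Fin k)).card :=
        Finset.card_le_card (Finset.subset_univ _)
    _ = k := Finset.card_univ.trans (Fintype.card_fin k)
end
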